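/- arXiv:2310.18568 — 16 statements merged into one kernel-verified Lean document; each statement's English description precedes it below -/
import Mathlib

section
/- Let n ≥ 2 be an even integer and let F(x) = x^7 on F_{2^n}. For all a, b ∈ F_{2^n} with ab(a+b) ≠ 0, if c = a/b satisfies c^2 + c + 1 = 0, then ∇_F(a,b) = 4. -/
theorem stmt_0 (n : ℕ) (hn : 2 ≤ n) (hne : Even n)
    (F : Type) [Field F] [Fintype F] [DecidableEq F]
    (hcard : Fintype.card F = 2 ^ n)
    (a b : F) (hab : a * b * (a + b) ≠ 0)
    (c : F) (hc : c = a / b) (hroot : c ^ 2 + c + 1 = 0) :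
    (Finset.univ.filter (fun x : F =>
      (x + a + b) ^ 7 + (x + b) ^ 7 + (x + a) ^ 7 + x ^ 7 = 0)).card = 4 := by
  have ha : a ≠ 0 := fun h => hab (by simp [h])
  have hb : b ≠ 0 := fun h => hab (by simp [h])
  have hab' : a + b ≠ 0 := fun h => hab (by simp [h])
  -- characteristic 2
  have h2 : (2 : F) = 0 := by
    have hc0 : ((Fintype.card F : ℕ) : F) = 0 := Nat.cast_card_eq_zero F
    rw [hcard] at hc0
    push_cast at hc0
    have hn0 : n ≠ 0 := by omega
    exact pow_eq_zero_iff hn0 |>.mp hc0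
  -- a^2 + ab + b^2 = 0
  have hs : a ^ 2 + a * b + b ^ 2 = 0 := by
    rw [hc] at hroot
    field_simp at hroot
    have h : b * (a ^ 2 + a * b + b ^ 2) = 0 := by linear_combination b * hroot
    rcases mul_eq_zero.mp h with h | h
    · exact absurd h hb
    · exact h
  -- key factorization
  have key : ∀ x : F, (x + a + b) ^ 7 + (x + b) ^ 7 + (x + a) ^ 7 + x ^ 7
      = a * b * (a + b) * (x * (x + a) * (x + b) * (x + a + b)) := by
    intro x
    linear_combination (b^7 + 3*a*b^6 + 10*a^2*b^5 + 17*a^3*b^4 + 17*a^4*b^3 + 10*a^5*b^2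
      + 3*a^6*b + a^7 + 7*x*b^6 + 21*x*a*b^5 + 52*x*a^2*b^4 + 69*x*a^3*b^3 + 52*x*a^4*b^2
      + 21*x*a^5*b + 7*x*a^6 + 21*x^2*b^5 + 52*x^2*a*b^4 + 103*x^2*a^2*b^3 + 103*x^2*a^3*b^2
      + 52*x^2*a^4*b + 21*x^2*a^5 + 35*x^3*b^4 + 69*x^3*a*b^3 + 103*x^3*a^2*b^2 + 69*x^3*a^3*b
      + 35*x^3*a^4 + 35*x^4*b^3 + 52*x^4*a*b^2 + 52*x^4*a^2*b + 35*x^4*a^3 + 21*x^5*b^2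
      + 21*x^5*a*b + 21*x^5*a^2 + 7*x^6*b + 7*x^6*a + 2*x^7) * h2
      + (a*b^4 + a^4*b) * hs
  have hset : (Finset.univ.filter (fun x : F =>
      (x + a + b) ^ 7 + (x + b) ^ 7 + (x + a) ^ 7 + x ^ 7 = 0)) = {0, a, b, a + b} := by
    ext x
    simp only [Finset.mem_filter, Finset.mem_univ, true_and, Finset.mem_insert,
      Finset.mem_singleton, key]
    constructor
    · intro h
      rcases mul_eq_zero.mp h with h | h
      · exact absurd h hab
      rcases mul_eq_zero.mp h with h | h
      rcases mul_eq_zero.mp h with h | h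
      rcases mul_eq_zero.mp h with h | h
      · exact Or.inl h
      · refine Or.inr (Or.inl ?_); linear_combination h - a*h2
      · refine Or.inr (Or.inr (Or.inl ?_)); linear_combination h - b*h2
      · refine Or.inr (Or.inr (Or.inr ?_)); linear_combination h - a*h2 - b*h2
    · rintro (rfl | h | h | h)
      · ring
      · rw [h, show a + a = 0 by linear_combination a*h2]; ring
      · rw [h, show b + b = 0 by linear_combination b*h2]; ring
      · rw [h, show a + b + a + b = 0 by linear_combination a*h2 + b*h2]; ring
  rw [hset]
  have h0a : (0 : F) ≠ a := fun h => ha h.symm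
  have h0b : (0 : F) ≠ b := fun h => hb h.symm
  have h0ab : (0 : F) ≠ a + b := fun h => hab' h.symm
  have hab2 : a ≠ b := fun h => hab' (by rw [h]; linear_combination b*h2)
  have haab : a ≠ a + b := fun h => hb (by linear_combination -h)
  have hbab : b ≠ a + b := fun h => ha (by linear_combination -h)
  rw [Finset.card_insert_of_notMem (by simp [h0a, h0b, h0ab]),
    Finset.card_insert_of_notMem (by simp [hab2, haab]),
    Finset.card_insert_of_notMem (by simp [hbab]),
    Finset.card_singleton]
end

section
/- Let n be a positive integer and let F(x) = x^7 on F_{2^n}. Let a, b ∈ F_{2^n} with ab(a+b) ≠ 0, set c = a/b and assume c^2 + c + 1 ≠ 0. Put a_1 = c^2 + c, a_0 = (c^2+c+1)^2, ω_1 = a_0/a_1^2, ω_2 = a_0 c^2/a_1^2, ω_3 = a_0 (c+1)^2/a_1^2. If Tr_1^n(ω_1) = Tr_1^n(ω_2) = Tr_1^n(ω_3) = 0, then ∇_F(a,b) = 4. -/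
open Finset Polynomial

private lemma two_eq_zero' {F : Type} [Field F] [Fintype F] {n : ℕ} (hn : 0 < n)
    (hcard : Fintype.card F = 2 ^ n) : (2 : F) = 0 := by
  have h := FiniteField.cast_card_eq_zero F
  rw [hcard] at h
  push_cast at h
  exact pow_eq_zero_iff hn.ne' |>.mp h

private lemma charP_two' {F : Type} [Field F] [Fintype F] {n : ℕ} (hn : 0 < n)
    (hcard : Fintype.card F = 2 ^ n) : CharP F 2 := by
  have h2 : (2 : F) = 0 := two_eq_zero' hn hcard
  have hdvd : ringChar F ∣ 2 := ringChar.dvd (by exact_mod_cast h2)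
  rcases CharP.char_is_prime_or_zero F (ringChar F) with hp | hp
  · have : ringChar F = 2 := (Nat.prime_dvd_prime_iff_eq hp Nat.prime_two).mp hdvd
    rw [← this]; exact ringChar.charP F
  · rw [hp] at hdvd
    simp at hdvd

private lemma tr_add' {F : Type} [Field F] [Fintype F] {n : ℕ} (hn : 0 < n)
    (hcard : Fintype.card F = 2 ^ n) (u v : F) :
    ∑ i ∈ Finset.range n, (u + v) ^ 2 ^ i
      = ∑ i ∈ Finset.range n, u ^ 2 ^ i + ∑ i ∈ Finset.range n, v ^ 2 ^ i := by
  haveI := charP_two' hn hcard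
  rw [← Finset.sum_add_distrib]
  exact Finset.sum_congr rfl fun i _ => add_pow_char_pow ..

private lemma tr_sq' {F : Type} [Field F] [Fintype F] {n : ℕ} (hn : 0 < n)
    (hcard : Fintype.card F = 2 ^ n) (u : F) :
    ∑ i ∈ Finset.range n, (u ^ 2) ^ 2 ^ i = ∑ i ∈ Finset.range n, u ^ 2 ^ i := by
  have hre : ∀ i : ℕ, (u ^ 2) ^ 2 ^ i = u ^ 2 ^ (i + 1) := by
    intro i
    rw [← pow_mul, ← pow_succ']
  have hn' : u ^ 2 ^ n = u := by
    rw [← hcard]; exact FiniteField.pow_card u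
  have h1 := Finset.sum_range_succ' (fun i => u ^ 2 ^ i) n
  have h2 := Finset.sum_range_succ (fun i => u ^ 2 ^ i) n
  calc ∑ i ∈ Finset.range n, (u ^ 2) ^ 2 ^ i
      = ∑ i ∈ Finset.range n, u ^ 2 ^ (i + 1) := Finset.sum_congr rfl fun i _ => hre i
    _ = ∑ i ∈ Finset.range n, u ^ 2 ^ i := by
        have := h1.symm.trans h2
        rw [hn'] at this
        simpa using this

private lemma exists_AS {F : Type} [Field F] [Fintype F] [DecidableEq F] {n : ℕ} (hn : 0 < n)
    (hcard : Fintype.card F = 2 ^ n) (z : F)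
    (hz : ∑ i ∈ Finset.range n, z ^ 2 ^ i = 0) : ∃ w : F, w ^ 2 + w = z := by
  classical
  haveI := charP_two' hn hcard
  haveI : Fact (Nat.Prime 2) := ⟨Nat.prime_two⟩
  have h2 : (2 : F) = 0 := two_eq_zero' hn hcard
  set T : F → F := fun u => ∑ i ∈ Finset.range n, u ^ 2 ^ i with hT
  -- T of an Artin-Schreier value is zero
  have hTAS : ∀ w : F, T (w ^ 2 + w) = 0 := by
    intro w
    have := tr_add' hn hcard (w ^ 2) w
    rw [hT]
    simp only
    rw [this, tr_sq' hn hcard w]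
    linear_combination (∑ i ∈ Finset.range n, w ^ 2 ^ i) * h2
  -- T takes values 0 or 1
  have hT01 : ∀ u : F, T u = 0 ∨ T u = 1 := by
    intro u
    have hsq : (T u) ^ 2 = T u := by
      rw [hT]
      simp only
      rw [sum_pow_char]
      have : ∀ i ∈ Finset.range n, (u ^ 2 ^ i) ^ 2 = (u ^ 2) ^ 2 ^ i := by
        intro i _
        rw [← pow_mul, ← pow_mul, mul_comm]
      rw [Finset.sum_congr rfl this, tr_sq' hn hcard u]
    have : T u * (T u - 1) = 0 := by linear_combination (T u + 1) * hsq - hsq - T u * hsq + hsq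
    rcases mul_eq_zero.mp this with h | h
    · exact Or.inl h
    · exact Or.inr (sub_eq_zero.mp h)
  -- T is not identically zero
  have hex1 : ∃ y : F, T y ≠ 0 := by
    by_contra hctr
    push_neg at hctr
    set p : F[X] := ∑ i ∈ Finset.range n, (X : F[X]) ^ 2 ^ i with hp
    have hev : ∀ y : F, p.eval y = 0 := by
      intro y
      have : p.eval y = T y := by
        rw [hp, Polynomial.eval_finset_sum]
        simp [hT]
      rw [this, hctr]
    have hdeg : p.natDegree < Fintype.card F := by
      have h1 : p.natDegree ≤ 2 ^ (n - 1) := by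
        apply Polynomial.natDegree_sum_le_of_forall_le
        intro i hi
        rw [Polynomial.natDegree_X_pow]
        have := Finset.mem_range.mp hi
        exact Nat.pow_le_pow_right (by norm_num) (by omega : i ≤ n - 1)
      calc p.natDegree ≤ 2 ^ (n - 1) := h1
        _ < 2 ^ n := Nat.pow_lt_pow_right (by norm_num) (by omega)
        _ = Fintype.card F := hcard.symm
    have hp0 : p = 0 :=
      Polynomial.eq_zero_of_natDegree_lt_card_of_eval_eq_zero' p Finset.univ
        (fun y _ => hev y) (by rwa [Finset.card_univ])
    have hco : p.coeff (2 ^ (n - 1)) = 1 := by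
      rw [hp, Polynomial.finset_sum_coeff]
      have hco' : ∀ i ∈ Finset.range n,
          ((X : F[X]) ^ 2 ^ i).coeff (2 ^ (n - 1)) = if i = n - 1 then 1 else 0 := by
        intro i _
        rw [Polynomial.coeff_X_pow]
        congr 1
        simp only [eq_iff_iff]
        constructor
        · intro h
          exact (Nat.pow_right_injective (le_refl 2) h.symm)
        · intro h; rw [h]
      rw [Finset.sum_congr rfl hco', Finset.sum_ite_eq' (Finset.range n) (n - 1) fun _ => (1 : F)]
      simp [Finset.mem_range]
      omega
    rw [hp0] at hco
    simp at hco
  obtain ⟨y1, hy1⟩ := hex1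
  -- counting
  set S0 : Finset F := Finset.univ.filter (fun u => T u = 0) with hS0
  set I0 : Finset F := Finset.univ.image (fun w : F => w ^ 2 + w) with hI0
  have hsub : I0 ⊆ S0 := by
    intro y hy
    rw [hI0, Finset.mem_image] at hy
    obtain ⟨w, _, rfl⟩ := hy
    rw [hS0, Finset.mem_filter]
    exact ⟨Finset.mem_univ _, hTAS w⟩
  have hfib : ∀ y ∈ I0, (Finset.univ.filter (fun w : F => w ^ 2 + w = y)).card = 2 := by
    intro y hy
    rw [hI0, Finset.mem_image] at hy
    obtain ⟨w0, _, rfl⟩ := hy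
    have : Finset.univ.filter (fun w : F => w ^ 2 + w = w0 ^ 2 + w0) = {w0, w0 + 1} := by
      ext w
      simp only [Finset.mem_filter, Finset.mem_univ, true_and, Finset.mem_insert,
        Finset.mem_singleton]
      constructor
      · intro h
        have hfac : (w - w0) * (w - (w0 + 1)) = 0 := by
          linear_combination h - w * w0 * h2 - w * h2 + w0 ^ 2 * h2 + w0 * h2
        rcases mul_eq_zero.mp hfac with h | h
        · exact Or.inl (sub_eq_zero.mp h)
        · exact Or.inr (sub_eq_zero.mp h)
      · rintro (rfl | rfl)
        · rfl
        · linear_combination (w0 + 1) * h2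
    rw [this]
    rw [Finset.card_insert_of_notMem, Finset.card_singleton]
    simp only [Finset.mem_singleton]
    intro h
    have : (1 : F) = 0 := by linear_combination -h
    simp at this
  have hcount : Fintype.card F = 2 * I0.card := by
    have := Finset.card_eq_sum_card_image (fun w : F => w ^ 2 + w) Finset.univ
    rw [Finset.card_univ] at this
    rw [this]
    rw [Finset.sum_congr rfl (fun y hy => hfib y hy)]
    rw [Finset.sum_const, smul_eq_mul, mul_comm]
  have hSle : 2 * S0.card ≤ Fintype.card F := by
    have hinj : S0.card ≤ (Finset.univ.filter (fun u : F => ¬ T u = 0)).card := by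
      apply Finset.card_le_card_of_injOn (fun u => u + y1)
      · intro u hu
        rw [hS0, Finset.mem_coe, Finset.mem_filter] at hu
        rw [Finset.mem_coe, Finset.mem_filter]
        refine ⟨Finset.mem_univ _, ?_⟩
        have : T (u + y1) = T u + T y1 := tr_add' hn hcard u y1
        rw [this, hu.2, zero_add]
        exact hy1
      · intro u _ u' _ h
        simpa using h
    have hsum := Finset.card_filter_add_card_filter_not (s := (Finset.univ : Finset F))
      (p := fun u : F => T u = 0)
    rw [Finset.card_univ, ← hS0] at hsum
    omega
  have hSI : S0 = I0 := by
    apply (Finset.eq_of_subset_of_card_le hsub ?_).symm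
    have h4 : 2 * S0.card ≤ 2 * I0.card := hSle.trans (le_of_eq hcount)
    exact Nat.le_of_mul_le_mul_left h4 two_pos
  have hzS : z ∈ S0 := by
    rw [hS0, Finset.mem_filter]
    exact ⟨Finset.mem_univ _, hz⟩
  rw [hSI, hI0, Finset.mem_image] at hzS
  obtain ⟨w, _, hw⟩ := hzS
  exact ⟨w, hw⟩

theorem stmt_1 (n : ℕ) (hn : 0 < n)
    (F : Type) [Field F] [Fintype F] [DecidableEq F]
    (hcard : Fintype.card F = 2 ^ n)
    (a b : F) (hab : a * b * (a + b) ≠ 0)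
    (c : F) (hc : c = a / b) (hroot : c ^ 2 + c + 1 ≠ 0)
    (a₁ a₀ ω₁ ω₂ ω₃ : F)
    (ha₁ : a₁ = c ^ 2 + c) (ha₀ : a₀ = (c ^ 2 + c + 1) ^ 2)
    (hω₁ : ω₁ = a₀ / a₁ ^ 2) (hω₂ : ω₂ = a₀ * c ^ 2 / a₁ ^ 2)
    (hω₃ : ω₃ = a₀ * (c + 1) ^ 2 / a₁ ^ 2)
    (htr₁ : ∑ i ∈ Finset.range n, ω₁ ^ 2 ^ i = 0)
    (htr₂ : ∑ i ∈ Finset.range n, ω₂ ^ 2 ^ i = 0)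
    (htr₃ : ∑ i ∈ Finset.range n, ω₃ ^ 2 ^ i = 0) :
    (Finset.univ.filter (fun x : F =>
      (x + a + b) ^ 7 + (x + b) ^ 7 + (x + a) ^ 7 + x ^ 7 = 0)).card = 4 := by
  classical
  have h2 : (2 : F) = 0 := two_eq_zero' hn hcard
  have ha0 : a ≠ 0 := left_ne_zero_of_mul (left_ne_zero_of_mul hab)
  have hb0 : b ≠ 0 := right_ne_zero_of_mul (left_ne_zero_of_mul hab)
  have hs0 : a + b ≠ 0 := right_ne_zero_of_mul hab
  have hac : a = b * c := by rw [hc]; field_simp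
  have hc0 : c ≠ 0 := by intro h; rw [h, mul_zero] at hac; exact ha0 hac
  have hc1 : c + 1 ≠ 0 := by
    intro h
    have hcc : c = 1 := by linear_combination h - h2
    apply hs0
    rw [hac, hcc, mul_one]
    linear_combination b * h2
  have hcc0 : c ^ 2 + c ≠ 0 := by
    intro h
    apply hc0
    have hfac : c * (c + 1) = 0 := by linear_combination h
    rcases mul_eq_zero.mp hfac with h' | h'
    · exact h'
    · exact (hc1 h').elim
  have hw1 : ω₁ * (c ^ 2 + c) ^ 2 = (c ^ 2 + c + 1) ^ 2 := by
    rw [hω₁, ha₀, ha₁]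
    field_simp
  have hw2' : ω₂ * (c + 1) ^ 2 = (c ^ 2 + c + 1) ^ 2 := by
    rw [hω₂, ha₀, ha₁]
    field_simp
  have hww : ω₁ * c ^ 2 = ω₂ := by
    have h3 : ω₁ * c ^ 2 * (c + 1) ^ 2 = ω₂ * (c + 1) ^ 2 := by
      rw [hw2']
      linear_combination hw1
    exact mul_right_cancel₀ (pow_ne_zero 2 hc1) h3
  obtain ⟨w, hw⟩ := exists_AS hn hcard ω₂ htr₂
  set t : F := w / c with htdef
  have htc : t * c = w := div_mul_cancel₀ w hc0
  set z : F := ω₁ + t ^ 2 + t with hzdef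
  have hTz : ∑ i ∈ Finset.range n, z ^ 2 ^ i = 0 := by
    rw [hzdef, tr_add' hn hcard (ω₁ + t ^ 2) t, tr_add' hn hcard ω₁ (t ^ 2),
      tr_sq' hn hcard t, htr₁, zero_add]
    linear_combination (∑ i ∈ Finset.range n, t ^ 2 ^ i) * h2
  obtain ⟨v, hv⟩ := exists_AS hn hcard z hTz
  have hz2 : z * c ^ 2 = w * (c + 1) := by
    rw [hzdef]
    linear_combination hww + (t * c + w + c) * htc - hw + w ^ 2 * h2
  have s1 : (c ^ 2 * z) ^ 2 + (c + 1) * (c ^ 2 * z) = (c ^ 2 + c + 1) ^ 2 := by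
    linear_combination (c ^ 2 * z + w * (c + 1) + (c + 1)) * hz2 + (c + 1) ^ 2 * hw + hw2'
  have he : a ^ 2 + a * b + b ^ 2 = b ^ 2 * (c ^ 2 + c + 1) := by rw [hac]; ring
  have hf : a * b * (a + b) = b ^ 3 * (c ^ 2 + c) := by rw [hac]; ring
  have hP : (b*c*v)^4 + (a^2 + a*b + b^2)*(b*c*v)^2 + (a*b*(a+b))*(b*c*v)
      + (a^2 + a*b + b^2)^2 = 0 := by
    rw [he, hf]
    linear_combination (b^4*(c^4*v^2 - c^4*v + c^4*z + 2*c^4 + c^3 + c^2)) * hv + b^4 * s1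
      + (b^4*(c^4*z + (c^2+c+1)^2 - (c^4*z+c^4)*v)) * h2
  have hkey : ∀ x : F, (x + a + b) ^ 7 + (x + b) ^ 7 + (x + a) ^ 7 + x ^ 7
      = a*b*(a+b) * ((x + b*c*v) * (x + b*c*v + a) * (x + b*c*v + b) * (x + b*c*v + a + b)) := by
    intro x
    linear_combination (a*b*(a+b)) * hP + (2*x^7 + 7*x^6*a + 7*x^6*b + 21*x^5*a^2 + 21*x^5*a*b + 21*x^5*b^2 + 35*x^4*a^3 + 52*x^4*a^2*b + 52*x^4*a*b^2 + 35*x^4*b^3 + 35*x^3*a^4 + 69*x^3*a^3*b - 2*x^3*a^2*b^2*c*v + 103*x^3*a^2*b^2 - 2*x^3*a*b^3*c*v + 69*x^3*a*b^3 + 35*x^3*b^4 + 21*x^2*a^5 + 52*x^2*a^4*b - 3*x^2*a^3*b^2*c*v + 103*x^2*a^3*b^2 - 3*x^2*a^2*b^3*c^2*v^2 - 6*x^2*a^2*b^3*c*v + 103*x^2*a^2*b^3 - 3*x^2*a*b^4*c^2*v^2 - 3*x^2*a*b^4*c*v + 52*x^2*a*b^4 + 21*x^2*b^5 + 7*x*a^6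 + 21*x*a^5*b - x*a^4*b^2*c*v + 52*x*a^4*b^2 - 3*x*a^3*b^3*c^2*v^2 - 4*x*a^3*b^3*c*v + 69*x*a^3*b^3 - 2*x*a^2*b^4*c^3*v^3 - 6*x*a^2*b^4*c^2*v^2 - 4*x*a^2*b^4*c*v + 52*x*a^2*b^4 - 2*x*a*b^5*c^3*v^3 - 3*x*a*b^5*c^2*v^2 - x*a*b^5*c*v + 21*x*a*b^5 + 7*x*b^6 + a^7 + 3*a^6*b + 9*a^5*b^2 - a^4*b^3*c^2*v^2 - a^4*b^3*c*v + 15*a^4*b^3 - a^3*b^4*c^3*v^3 - 3*a^3*b^4*c^2*v^2 - 2*a^3*b^4*c*v + 15*a^3*b^4 - a^2*b^5*c^4*v^4 - 2*a^2*b^5*c^3*v^3 - 3*a^2*b^5*c^2*v^2 - a^2*b^5*c*v + 9*a^2*b^5 - a*b^6*c^4*v^4 - a*b^6*c^3*v^3 - a*b^6*c^2*v^2 + 3*a*b^6 + b^7) * h2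
  have hset : (Finset.univ.filter (fun x : F =>
      (x + a + b) ^ 7 + (x + b) ^ 7 + (x + a) ^ 7 + x ^ 7 = 0))
      = {b*c*v, b*c*v + a, b*c*v + b, b*c*v + a + b} := by
    ext x
    simp only [Finset.mem_filter, Finset.mem_univ, true_and, Finset.mem_insert,
      Finset.mem_singleton]
    rw [hkey x]
    constructor
    · intro h
      rcases mul_eq_zero.mp h with h | h
      · exact absurd h hab
      · rcases mul_eq_zero.mp h with h | h
        · rcases mul_eq_zero.mp h with h | h
          · rcases mul_eq_zero.mp h with h | h
            · exact Or.inl (by linear_combination h - (b*c*v)*h2)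
            · exact Or.inr (Or.inl (by linear_combination h - (b*c*v+a)*h2))
          · exact Or.inr (Or.inr (Or.inl (by linear_combination h - (b*c*v+b)*h2)))
        · exact Or.inr (Or.inr (Or.inr (by linear_combination h - (b*c*v+a+b)*h2)))
    · rintro (h | h | h | h) <;> rw [h]
      · linear_combination (2*a^4*b^3*c^2*v^2 + a^4*b^3*c*v + 8*a^3*b^4*c^3*v^3 + 8*a^3*b^4*c^2*v^2 + 2*a^3*b^4*c*v + 8*a^2*b^5*c^4*v^4 + 16*a^2*b^5*c^3*v^3 + 8*a^2*b^5*c^2*v^2 + a^2*b^5*c*v + 8*a*b^6*c^4*v^4 + 8*a*b^6*c^3*v^3 + 2*a*b^6*c^2*v^2) * h2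
      · linear_combination (2*a^6*b + 12*a^5*b^2*c*v + 5*a^5*b^2 + 26*a^4*b^3*c^2*v^2 + 25*a^4*b^3*c*v + 4*a^4*b^3 + 24*a^3*b^4*c^3*v^3 + 44*a^3*b^4*c^2*v^2 + 16*a^3*b^4*c*v + a^3*b^4 + 8*a^2*b^5*c^4*v^4 + 32*a^2*b^5*c^3*v^3 + 20*a^2*b^5*c^2*v^2 + 3*a^2*b^5*c*v + 8*a*b^6*c^4*v^4 + 8*a*b^6*c^3*v^3 + 2*a*b^6*c^2*v^2) * h2
      · linear_combination (2*a^4*b^3*c^2*v^2 + 3*a^4*b^3*c*v + a^4*b^3 + 8*a^3*b^4*c^3*v^3 + 20*a^3*b^4*c^2*v^2 + 16*a^3*b^4*c*v + 4*a^3*b^4 + 8*a^2*b^5*c^4*v^4 + 32*a^2*b^5*c^3*v^3 + 44*a^2*b^5*c^2*v^2 + 25*a^2*b^5*c*v + 5*a^2*b^5 + 8*a*b^6*c^4*v^4 + 24*a*b^6*c^3*v^3 + 26*a*b^6*c^2*v^2 + 12*a*b^6*c*v + 2*a*b^6) * h2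
      · linear_combination (2*a^6*b + 12*a^5*b^2*c*v + 11*a^5*b^2 + 26*a^4*b^3*c^2*v^2 + 51*a^4*b^3*c*v + 23*a^4*b^3 + 24*a^3*b^4*c^3*v^3 + 80*a^3*b^4*c^2*v^2 + 78*a^3*b^4*c*v + 23*a^3*b^4 + 8*a^2*b^5*c^4*v^4 + 48*a^2*b^5*c^3*v^3 + 80*a^2*b^5*c^2*v^2 + 51*a^2*b^5*c*v + 11*a^2*b^5 + 8*a*b^6*c^4*v^4 + 24*a*b^6*c^3*v^3 + 26*a*b^6*c^2*v^2 + 12*a*b^6*c*v + 2*a*b^6) * h2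
  rw [hset]
  rw [Finset.card_insert_of_notMem, Finset.card_insert_of_notMem,
    Finset.card_insert_of_notMem, Finset.card_singleton]
  · simp only [Finset.mem_singleton]
    intro h
    exact ha0 (by linear_combination -h)
  · simp only [Finset.mem_insert, Finset.mem_singleton]
    push_neg
    constructor
    · intro h
      exact hs0 (by linear_combination h + b*h2)
    · intro h
      exact hb0 (by linear_combination -h)
  · simp only [Finset.mem_insert, Finset.mem_singleton]
    push_neg
    refine ⟨?_, ?_, ?_⟩
    · intro h
      exact ha0 (by linear_combination -h)
    · intro h
      exact hb0 (by linear_combination -h)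
    · intro h
      exact hs0 (by linear_combination -h)
end

section
/- Let n be a positive integer and let F(x) = x^7 on F_{2^n}. Let a, b ∈ F_{2^n} with ab(a+b) ≠ 0, set c = a/b and assume c^2 + c + 1 ≠ 0. Put a_1 = c^2 + c, a_0 = (c^2+c+1)^2, ω_1 = a_0/a_1^2, ω_2 = a_0 c^2/a_1^2, ω_3 = a_0 (c+1)^2/a_1^2. If Tr_1^n(ω_i) = 1 for some i ∈ {1,2,3}, then ∇_F(a,b) = 0. -/
theorem stmt_2 (n : ℕ) (hn : 0 < n)
    (F : Type) [Field F] [Fintype F] [DecidableEq F]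
    (hcard : Fintype.card F = 2 ^ n)
    (a b : F) (hab : a * b * (a + b) ≠ 0)
    (c : F) (hc : c = a / b) (hroot : c ^ 2 + c + 1 ≠ 0)
    (a₁ a₀ ω₁ ω₂ ω₃ : F)
    (ha₁ : a₁ = c ^ 2 + c) (ha₀ : a₀ = (c ^ 2 + c + 1) ^ 2)
    (hω₁ : ω₁ = a₀ / a₁ ^ 2) (hω₂ : ω₂ = a₀ * c ^ 2 / a₁ ^ 2)
    (hω₃ : ω₃ = a₀ * (c + 1) ^ 2 / a₁ ^ 2)
    (htr : (∑ i ∈ Finset.range n, ω₁ ^ 2 ^ i = 1) ∨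
           (∑ i ∈ Finset.range n, ω₂ ^ 2 ^ i = 1) ∨
           (∑ i ∈ Finset.range n, ω₃ ^ 2 ^ i = 1)) :
    (Finset.univ.filter (fun x : F =>
      (x + a + b) ^ 7 + (x + b) ^ 7 + (x + a) ^ 7 + x ^ 7 = 0)).card = 0 := by
  -- basic nonvanishing facts
  have ha : a ≠ 0 := fun h => hab (by rw [h]; ring)
  have hb : b ≠ 0 := fun h => hab (by rw [h]; ring)
  have hab2 : a + b ≠ 0 := fun h => hab (by rw [h]; ring)
  have hcne : c ≠ 0 := by rw [hc]; exact div_ne_zero ha hb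
  have hc1 : c + 1 ≠ 0 := by
    rw [hc]
    intro h
    apply hab2
    have : a / b + 1 = (a + b) / b := by field_simp
    rw [this] at h
    exact (div_eq_zero_iff.mp h).resolve_right hb
  have hcc : c ^ 2 + c ≠ 0 := by
    intro h
    have : c * (c + 1) = 0 := by linear_combination h
    rcases mul_eq_zero.mp this with h' | h'
    · exact hcne h'
    · exact hc1 h'
  -- characteristic 2
  have hp2 : ringChar F = 2 := by
    have hP : CharP F (ringChar F) := ringChar.charP F
    obtain ⟨m, hprime, hcard'⟩ := FiniteField.card F (ringChar F)
    have hdvd : ringChar F ∣ 2 ^ n := by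
      rw [← hcard, hcard']
      exact dvd_pow_self _ (by positivity)
    have hd2 : ringChar F ∣ 2 := (Nat.Prime.prime hprime).dvd_of_dvd_pow hdvd
    exact (Nat.prime_dvd_prime_iff_eq hprime Nat.prime_two).mp hd2
  haveI hchar : CharP F 2 := by rw [← hp2]; exact ringChar.charP F
  haveI : Fact (Nat.Prime 2) := ⟨Nat.prime_two⟩
  have h2 : (2 : F) = 0 := by exact_mod_cast CharP.cast_eq_zero F 2
  -- Frobenius
  have hfrob : ∀ u : F, u ^ 2 ^ n = u := by
    intro u
    rw [← hcard]
    exact FiniteField.pow_card u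
  -- trace of t^2 + t is zero
  have Tlem : ∀ t : F, ∑ i ∈ Finset.range n, (t ^ 2 + t) ^ 2 ^ i = 0 := by
    intro t
    have h1 : ∀ i, (t ^ 2 + t) ^ 2 ^ i = t ^ 2 ^ (i + 1) - t ^ 2 ^ i := by
      intro i
      have hadd : (t ^ 2 + t) ^ 2 ^ i = (t ^ 2) ^ 2 ^ i + t ^ 2 ^ i :=
        add_pow_char_pow (t ^ 2) t 2 i
      rw [hadd, ← pow_mul]
      have : 2 * 2 ^ i = 2 ^ (i + 1) := by ring
      rw [this]
      rw [sub_eq_add_neg, CharTwo.neg_eq]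
    calc ∑ i ∈ Finset.range n, (t ^ 2 + t) ^ 2 ^ i
        = ∑ i ∈ Finset.range n, (t ^ 2 ^ (i + 1) - t ^ 2 ^ i) :=
          Finset.sum_congr rfl fun i _ => h1 i
      _ = t ^ 2 ^ n - t ^ 2 ^ 0 := Finset.sum_range_sub (fun i => t ^ 2 ^ i) n
      _ = 0 := by rw [hfrob, pow_zero, pow_one, sub_self]
  -- main argument: filter is empty
  rw [Finset.card_eq_zero, Finset.eq_empty_iff_forall_notMem]
  intro x hx
  rw [Finset.mem_filter] at hx
  have hxeq := hx.2
  set y : F := x / b with hydef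
  -- scaled equation
  have hY : (y + c + 1) ^ 7 + (y + 1) ^ 7 + (y + c) ^ 7 + y ^ 7 = 0 := by
    have h7 : b ^ 7 * ((y + c + 1) ^ 7 + (y + 1) ^ 7 + (y + c) ^ 7 + y ^ 7)
        = (x + a + b) ^ 7 + (x + b) ^ 7 + (x + a) ^ 7 + x ^ 7 := by
      rw [hydef, hc]
      field_simp
    have := h7.trans hxeq
    exact (mul_eq_zero.mp this).resolve_left (pow_ne_zero 7 hb)
  -- the quartic
  have hq : y ^ 4 + (c ^ 2 + c + 1) * y ^ 2 + (c ^ 2 + c) * y + (c ^ 2 + c + 1) ^ 2 = 0 := by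
    have key : c * (c + 1) *
        (y ^ 4 + (c ^ 2 + c + 1) * y ^ 2 + (c ^ 2 + c) * y + (c ^ 2 + c + 1) ^ 2) = 0 := by
      linear_combination hY - (1 + 3*c + 9*c^2 + 15*c^3 + 15*c^4 + 9*c^5 + 3*c^6 + c^7
        + 7*y + 21*y*c + 52*y*c^2 + 69*y*c^3 + 52*y*c^4 + 21*y*c^5 + 7*y*c^6
        + 21*y^2 + 52*y^2*c + 104*y^2*c^2 + 104*y^2*c^3 + 52*y^2*c^4 + 21*y^2*c^5
        + 35*y^3 + 70*y^3*c + 105*y^3*c^2 + 70*y^3*c^3 + 35*y^3*c^4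
        + 35*y^4 + 52*y^4*c + 52*y^4*c^2 + 35*y^4*c^3
        + 21*y^5 + 21*y^5*c + 21*y^5*c^2 + 7*y^6 + 7*y^6*c + 2*y^7) * h2
    have hccne : c * (c + 1) ≠ 0 := mul_ne_zero hcne hc1
    exact (mul_eq_zero.mp key).resolve_left hccne
  -- set w
  set w : F := (y ^ 2 + y) / (c ^ 2 + c) with hwdef
  have hzw : (c ^ 2 + c) * w = y ^ 2 + y := by
    rw [hwdef]; field_simp
  have hw : w ^ 2 + w = ω₁ := by
    have key : (y ^ 2 + y) ^ 2 + (y ^ 2 + y) * (c ^ 2 + c) = (c ^ 2 + c + 1) ^ 2 := by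
      linear_combination hq + (y ^ 3 - (c ^ 2 + c + 1) ^ 2) * h2
    rw [hω₁, ha₀, ha₁, eq_div_iff (pow_ne_zero 2 hcc)]
    linear_combination key + ((c ^ 2 + c) * w + (y ^ 2 + y) + (c ^ 2 + c)) * hzw
  have hw2 : (c * w + y) ^ 2 + (c * w + y) = ω₂ := by
    have hω₂' : ω₂ = c ^ 2 * ω₁ := by rw [hω₂, hω₁]; ring
    rw [hω₂']
    linear_combination c ^ 2 * hw - hzw + (c * w * y + c * w) * h2
  have hw3 : ((c + 1) * w + y) ^ 2 + ((c + 1) * w + y) = ω₃ := by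
    have hω₃' : ω₃ = (c + 1) ^ 2 * ω₁ := by rw [hω₃, hω₁]; ring
    rw [hω₃']
    linear_combination (c + 1) ^ 2 * hw - hzw + ((c + 1) * w * y) * h2
  -- contradiction with trace condition
  rcases htr with h | h | h
  · rw [← hw] at h
    rw [Tlem w] at h
    exact zero_ne_one h
  · rw [← hw2] at h
    rw [Tlem (c * w + y)] at h
    exact zero_ne_one h
  · rw [← hw3] at h
    rw [Tlem ((c + 1) * w + y)] at h
    exact zero_ne_one h
end

section
/- Let m ≥ 1, n = 2m, and let F(x) = x^{2^{m+1}+3} on F_{2^n}. For a, b ∈ F_{2^n} with ab(a+b) ≠ 0, if c = a/b lies in the subfield F_{2^m} of F_{2^n} (i.e. c^{2^m} = c), then ∇_F(a,b) = 2^m. -/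
private lemma key_id {F : Type} [Field F] (h2 : (2:F) = 0) (A y c z : F)
    (hz : z ^ 2 = c ^ 2 + c + 1) :
    (A + c + 1) ^ 2 * (y + c + 1) ^ 3 + (A + 1) ^ 2 * (y + 1) ^ 3 +
      (A + c) ^ 2 * (y + c) ^ 3 + A ^ 2 * y ^ 3 = c * (c + 1) * (A + y + z) ^ 2 := by
  linear_combination (1 + 2*c + 4*c^2 + 4*c^3 + 2*c^4 + c^5 + 3*y + 6*y*c - y*c*z + 9*y*c^2
    - y*c^2*z + 6*y*c^3 + 3*y*c^4 + 3*y^2 + 4*y^2*c + 4*y^2*c^2 + 3*y^2*c^3 + y^3 + y^3*c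
    + y^3*c^2 + 2*A + 4*A*c - A*c*z + 6*A*c^2 - A*c^2*z + 4*A*c^3 + 2*A*c^4 + 6*A*y + 8*A*y*c
    + 8*A*y*c^2 + 6*A*y*c^3 + 6*A*y^2 + 6*A*y^2*c + 6*A*y^2*c^2 + 2*A*y^3 + 2*A*y^3*c + A^2
    + A^2*c + A^2*c^2 + A^2*c^3 + 3*A^2*y + 3*A^2*y*c + 3*A^2*y*c^2 + 3*A^2*y^2 + 3*A^2*y^2*c
    + 2*A^2*y^3) * h2 + (-c - c^2) * hz

private lemma count_fiber (F : Type) [Field F] [Fintype F] [DecidableEq F] [CharP F 2]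
    (m : ℕ) (hm : 1 ≤ m) (hcard : Fintype.card F = 2 ^ (2 * m))
    (z : F) (hz : z ^ 2 ^ m = z) :
    (Finset.univ.filter (fun y : F => y ^ 2 ^ m + y = z)).card = 2 ^ m := by
  haveI : Fact (Nat.Prime 2) := ⟨Nat.prime_two⟩
  have h2 : (2:F) = 0 := by exact_mod_cast CharP.cast_eq_zero F 2
  have hadd : ∀ u v : F, (u + v) ^ 2 ^ m = u ^ 2 ^ m + v ^ 2 ^ m := fun u v =>
    add_pow_char_pow ..
  set K : Finset F := Finset.univ.filter (fun y : F => y ^ 2 ^ m + y = 0) with hKdef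
  have hKle : K.card ≤ 2 ^ m := by
    have h1m : 1 < 2 ^ m := Nat.one_lt_two_pow (by omega)
    set p : Polynomial F := Polynomial.X ^ 2 ^ m + Polynomial.X with hpdef
    have hdeg : p.natDegree = 2 ^ m := by
      rw [hpdef, Polynomial.natDegree_add_eq_left_of_natDegree_lt, Polynomial.natDegree_X_pow]
      rw [Polynomial.natDegree_X_pow, Polynomial.natDegree_X]; exact h1m
    have hp0 : p ≠ 0 := by intro h; rw [h] at hdeg; simp at hdeg; omega
    have hsubK : K ⊆ p.roots.toFinset := by
      intro y hy
      rw [Multiset.mem_toFinset, Polynomial.mem_roots hp0]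
      simp only [hKdef, Finset.mem_filter] at hy
      simp [Polynomial.IsRoot, hpdef, hy.2]
    calc K.card ≤ p.roots.toFinset.card := Finset.card_le_card hsubK
      _ ≤ Multiset.card p.roots := Multiset.toFinset_card_le _
      _ ≤ p.natDegree := Polynomial.card_roots' p
      _ = 2 ^ m := hdeg
  have hfib : ∀ w : F, ∀ y0 : F, y0 ^ 2 ^ m + y0 = w →
      (Finset.univ.filter (fun y : F => y ^ 2 ^ m + y = w)).card = K.card := by
    intro w y0 hy0
    apply Finset.card_bij' (fun y _ => y + y0) (fun k _ => k + y0)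
    · intro y hy
      simp only [hKdef, Finset.mem_filter, Finset.mem_univ, true_and] at hy ⊢
      rw [hadd]
      linear_combination hy + hy0 + w * h2
    · intro k hk
      simp only [hKdef, Finset.mem_filter, Finset.mem_univ, true_and] at hk ⊢
      rw [hadd]
      linear_combination hk + hy0
    · intro y _; linear_combination y0 * h2
    · intro k _; linear_combination y0 * h2
  set I : Finset F := Finset.univ.image (fun y : F => y ^ 2 ^ m + y) with hIdef
  have hsum : Fintype.card F = I.card * K.card := by
    rw [← Finset.card_univ, Finset.card_eq_sum_card_image (fun y : F => y ^ 2 ^ m + y)]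
    rw [Finset.sum_congr rfl (fun w hw => ?_), Finset.sum_const, smul_eq_mul]
    obtain ⟨y0, _, hy0⟩ := Finset.mem_image.mp hw
    exact hfib w y0 hy0
  have hIsub : I ⊆ K := by
    intro w hw
    obtain ⟨y, _, rfl⟩ := Finset.mem_image.mp hw
    simp only [hKdef, Finset.mem_filter, Finset.mem_univ, true_and]
    rw [hadd]
    have hy2 : (y ^ 2 ^ m) ^ 2 ^ m = y := by
      rw [← pow_mul, ← pow_add, ← two_mul, ← hcard]
      exact FiniteField.pow_card y
    rw [hy2]
    linear_combination (y + y ^ 2 ^ m) * h2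
  have hIle : I.card ≤ K.card := Finset.card_le_card hIsub
  have hcard2 : I.card * K.card = 2 ^ m * 2 ^ m := by
    rw [← hsum, hcard, two_mul, pow_add]
  have hKge : 2 ^ m ≤ K.card := by
    by_contra h
    push_neg at h
    have : I.card * K.card < 2 ^ m * 2 ^ m :=
      Nat.mul_lt_mul_of_le_of_lt (le_trans hIle (le_of_lt h)) h (by positivity)
    omega
  have hKeq : K.card = 2 ^ m := le_antisymm hKle hKge
  have hIeq : I.card = 2 ^ m := by
    have h0 : (0:ℕ) < 2 ^ m := by positivity
    have := hcard2
    rw [hKeq] at this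
    exact Nat.eq_of_mul_eq_mul_right h0 this
  have hIK : I = K := Finset.eq_of_subset_of_card_le hIsub (by rw [hKeq, hIeq])
  have hzK : z ∈ K := by
    simp only [hKdef, Finset.mem_filter, Finset.mem_univ, true_and]
    rw [hz]
    linear_combination z * h2
  rw [← hIK] at hzK
  obtain ⟨y0, _, hy0⟩ := Finset.mem_image.mp hzK
  rw [hfib z y0 hy0, hKeq]

theorem stmt_4 (m n : ℕ) (hm : 1 ≤ m) (hn : n = 2 * m)
    (F : Type) [Field F] [Fintype F] [DecidableEq F]
    (hcard : Fintype.card F = 2 ^ n)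
    (a b : F) (hab : a * b * (a + b) ≠ 0)
    (c : F) (hc : c = a / b) (hsub : c ^ 2 ^ m = c) :
    (Finset.univ.filter (fun x : F =>
      (x + a + b) ^ (2 ^ (m + 1) + 3) + (x + b) ^ (2 ^ (m + 1) + 3) +
        (x + a) ^ (2 ^ (m + 1) + 3) + x ^ (2 ^ (m + 1) + 3) = 0)).card = 2 ^ m := by
  subst hn
  haveI hp2 : CharP F 2 := by
    obtain ⟨p, hp⟩ := CharP.exists F
    haveI := hp
    have hprime : p.Prime := CharP.char_is_prime F p
    obtain ⟨k, -, hcard'⟩ := FiniteField.card F p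
    have hdvd : p ∣ 2 ^ (2 * m) := by
      rw [← hcard, hcard']
      exact dvd_pow_self p (by exact_mod_cast k.ne_zero)
    have hp2' : p = 2 :=
      (Nat.prime_dvd_prime_iff_eq hprime Nat.prime_two).mp (hprime.dvd_of_dvd_pow hdvd)
    rwa [hp2'] at hp
  haveI : Fact (Nat.Prime 2) := ⟨Nat.prime_two⟩
  have h2 : (2:F) = 0 := by exact_mod_cast CharP.cast_eq_zero F 2
  have hadd : ∀ u v : F, (u + v) ^ 2 ^ m = u ^ 2 ^ m + v ^ 2 ^ m := fun u v =>
    add_pow_char_pow ..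
  have ha : a ≠ 0 := fun h => hab (by rw [h]; ring)
  have hb : b ≠ 0 := fun h => hab (by rw [h]; ring)
  have hs : a + b ≠ 0 := fun h => hab (by rw [h, mul_zero])
  have hcb : a = c * b := by rw [hc]; field_simp
  have hc0 : c ≠ 0 := by rw [hc]; exact div_ne_zero ha hb
  have hc1 : c + 1 ≠ 0 := by
    intro h
    exact hs (by rw [hcb]; linear_combination b * h)
  have hsqinj : Function.Injective (fun u : F => u ^ 2) := by
    intro u v huv
    apply frobenius_inj F 2
    simpa [frobenius_def] using huv
  obtain ⟨z, hz⟩ := Finite.surjective_of_injective hsqinj (c ^ 2 + c + 1)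
  simp only at hz
  have hzfix : z ^ 2 ^ m = z := by
    apply hsqinj
    show (z ^ 2 ^ m) ^ 2 = z ^ 2
    calc (z ^ 2 ^ m) ^ 2 = (z ^ 2) ^ 2 ^ m := by
          rw [← pow_mul, ← pow_mul, Nat.mul_comm]
      _ = (c ^ 2) ^ 2 ^ m + c ^ 2 ^ m + 1 := by rw [hz, hadd, hadd, one_pow]
      _ = (c ^ 2 ^ m) ^ 2 + c ^ 2 ^ m + 1 := by
          rw [← pow_mul, ← pow_mul, Nat.mul_comm]
      _ = z ^ 2 := by rw [hsub, hz]
  have hbd : b ^ (2 ^ (m + 1) + 3) ≠ 0 := pow_ne_zero _ hb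
  have hpoint : ∀ x : F,
      ((x + a + b) ^ (2 ^ (m + 1) + 3) + (x + b) ^ (2 ^ (m + 1) + 3) +
        (x + a) ^ (2 ^ (m + 1) + 3) + x ^ (2 ^ (m + 1) + 3) = 0) ↔
      ((x * b⁻¹) ^ 2 ^ m + x * b⁻¹ = z) := by
    intro x
    set y := x * b⁻¹ with hy
    have hx : x = y * b := by rw [hy, mul_assoc, inv_mul_cancel₀ hb, mul_one]
    have hqd : ∀ u : F, u ^ (2 ^ (m + 1) + 3) = (u ^ 2 ^ m) ^ 2 * u ^ 3 := fun u => by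
      rw [pow_add, pow_succ, pow_mul]
    have e1 : x + a + b = (y + c + 1) * b := by rw [hx, hcb]; ring
    have e2 : x + b = (y + 1) * b := by rw [hx]; ring
    have e3 : x + a = (y + c) * b := by rw [hx, hcb]; ring
    have key := key_id h2 (y ^ 2 ^ m) y c z hz
    have f1 : (y + c + 1) ^ 2 ^ m = y ^ 2 ^ m + c + 1 := by rw [hadd, hadd, hsub, one_pow]
    have f2 : (y + 1) ^ 2 ^ m = y ^ 2 ^ m + 1 := by rw [hadd, one_pow]
    have f3 : (y + c) ^ 2 ^ m = y ^ 2 ^ m + c := by rw [hadd, hsub]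
    have main : (x + a + b) ^ (2 ^ (m + 1) + 3) + (x + b) ^ (2 ^ (m + 1) + 3) +
        (x + a) ^ (2 ^ (m + 1) + 3) + x ^ (2 ^ (m + 1) + 3)
        = c * (c + 1) * (y ^ 2 ^ m + y + z) ^ 2 * b ^ (2 ^ (m + 1) + 3) := by
      rw [e1, e2, e3, hx, mul_pow, mul_pow, mul_pow, mul_pow,
        hqd (y + c + 1), hqd (y + 1), hqd (y + c), hqd y, f1, f2, f3]
      linear_combination (b ^ (2 ^ (m + 1) + 3)) * key
    rw [main]
    rw [mul_eq_zero, mul_eq_zero, mul_eq_zero]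
    simp only [hc0, hc1, hbd, or_false, false_or, pow_eq_zero_iff (two_ne_zero)]
    constructor
    · intro h; linear_combination h - z * h2
    · intro h; linear_combination h + z * h2
  rw [Finset.filter_congr (fun x _ => hpoint x)]
  have hbij : (Finset.univ.filter (fun x : F => (x * b⁻¹) ^ 2 ^ m + x * b⁻¹ = z)).card
      = (Finset.univ.filter (fun y : F => y ^ 2 ^ m + y = z)).card := by
    apply Finset.card_bij' (fun x _ => x * b⁻¹) (fun y _ => y * b)
    · intro x hx
      simp only [Finset.mem_filter, Finset.mem_univ, true_and] at hx ⊢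
      exact hx
    · intro y hy
      simp only [Finset.mem_filter, Finset.mem_univ, true_and] at hy ⊢
      field_simp
      exact hy
    · intro x _; field_simp
    · intro y _; field_simp
  rw [hbij]
  exact count_fiber F m hm hcard z hzfix
end

section
/- Let m ≥ 1, n = 2m, and let F(x) = x^{2^{m+1}+3} on F_{2^n}. For a, b ∈ F_{2^n} with ab(a+b) ≠ 0, if c = a/b satisfies c^2 + c + 1 = 0 and c does not lie in the subfield F_{2^m} (i.e. c^{2^m} ≠ c, which can occur only when m is odd), then ∇_F(a,b) = 4. -/
theorem stmt_5 (m n : ℕ) (hm : 1 ≤ m) (hn : n = 2 * m)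
    (F : Type) [Field F] [Fintype F] [DecidableEq F]
    (hcard : Fintype.card F = 2 ^ n)
    (a b : F) (hab : a * b * (a + b) ≠ 0)
    (c : F) (hc : c = a / b) (hroot : c ^ 2 + c + 1 = 0) (hsub : c ^ 2 ^ m ≠ c) :
    (Finset.univ.filter (fun x : F =>
      (x + a + b) ^ (2 ^ (m + 1) + 3) + (x + b) ^ (2 ^ (m + 1) + 3) +
        (x + a) ^ (2 ^ (m + 1) + 3) + x ^ (2 ^ (m + 1) + 3) = 0)).card = 4 := by
  -- basic nonvanishing
  have hane : a ≠ 0 := fun h => hab (by rw [h]; ring)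
  have hbne : b ≠ 0 := fun h => hab (by rw [h]; ring)
  have habne : a + b ≠ 0 := fun h => hab (by rw [h, mul_zero])
  -- characteristic 2
  have h2 : (2 : F) = 0 := by
    have h0 : ((Fintype.card F : ℕ) : F) = 0 := FiniteField.cast_card_eq_zero F
    rw [hcard] at h0
    push_cast at h0
    have hn0 : n ≠ 0 := by omega
    exact pow_eq_zero_iff hn0 |>.mp h0
  haveI : Fact (Nat.Prime 2) := ⟨Nat.prime_two⟩
  have hrc : ringChar F = 2 := CharP.ringChar_of_prime_eq_zero Nat.prime_two h2
  haveI hchar : CharP F 2 := hrc ▸ ringChar.charP F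
  have hfr : ∀ (k : ℕ) (z w : F), (z + w) ^ 2 ^ k = z ^ 2 ^ k + w ^ 2 ^ k :=
    fun k z w => add_pow_char_pow z w 2 k
  -- a = c * b
  have ha : a = c * b := by
    rw [hc]; field_simp
  have hc1 : c ≠ 1 := by
    intro h; rw [h] at hroot
    have : (1 : F) = 0 := by linear_combination hroot - h2
    exact one_ne_zero this
  -- roots of x^2+x+1
  have roots : ∀ y : F, y ^ 2 + y + 1 = 0 → y = c ∨ y = c + 1 := by
    intro y hy
    have hfac : (y - c) * (y - (c + 1)) = 0 := by
      linear_combination hy + hroot + (-(c * y) - y - 1) * h2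
    rcases mul_eq_zero.mp hfac with h | h
    · left; linear_combination h
    · right; linear_combination h
  -- c^(2^m) = c + 1
  have hcm : c ^ 2 ^ m = c + 1 := by
    have h1 : (c ^ 2 ^ m) ^ 2 + c ^ 2 ^ m + 1 = 0 := by
      have h : (c ^ 2 + c + 1) ^ 2 ^ m = 0 := by
        rw [hroot, zero_pow (pow_ne_zero m two_ne_zero)]
      rw [hfr m, hfr m, one_pow, ← pow_mul, Nat.mul_comm, pow_mul] at h
      exact h
    rcases roots _ h1 with h | h
    · exact absurd h hsub
    · exact h
  -- c^(2^(m+1)) = c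
  have hcq : c ^ 2 ^ (m + 1) = c := by
    have he : c ^ 2 ^ (m + 1) = (c ^ 2 ^ m) ^ 2 := by
      rw [← pow_mul, pow_succ]
    rw [he, hcm]
    linear_combination hroot
  -- key polynomial identity
  have key : ∀ x : F,
      (x + a + b) ^ (2 ^ (m + 1) + 3) + (x + b) ^ (2 ^ (m + 1) + 3) +
        (x + a) ^ (2 ^ (m + 1) + 3) + x ^ (2 ^ (m + 1) + 3)
      = b ^ 3 * x ^ 2 ^ (m + 1) + b ^ 2 ^ (m + 1) * b ^ 2 * x := by
    intro x
    have hsplit : ∀ z : F, z ^ (2 ^ (m + 1) + 3) = z ^ 2 ^ (m + 1) * z ^ 3 :=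
      fun z => pow_add z _ 3
    rw [hsplit, hsplit, hsplit, hsplit]
    rw [hfr (m+1) (x + a) b, hfr (m+1) x a, hfr (m+1) x b, ha, mul_pow, hcq]
    generalize x ^ 2 ^ (m + 1) = X
    generalize b ^ 2 ^ (m + 1) = B
    linear_combination
      (2*b^3*B + 2*b^3*B*c + 2*b^3*B*c^2 + X*b^3 + 2*X*b^3*c + 3*x*b^2*B
        + 6*x*b^2*B*c + 6*x*X*b^2 + 6*x^2*b*B) * hroot
      + (x*b^2*B + 3*x^2*X*b + 3*x^2*X*b*c + x^3*B + x^3*B*c + 2*x^3*X) * h2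
  -- every element satisfies y^(2^(2m)) = y
  have hY : ∀ y : F, y ^ 2 ^ (2 * m) = y := by
    intro y
    rw [← hn, ← hcard]
    exact FiniteField.pow_card y
  -- fixed points of (·)^(2^(m+1)) satisfy y^4 = y
  have hy4 : ∀ y : F, y ^ 2 ^ (m + 1) = y → y ^ 4 = y := by
    intro y hy
    have h1 : y ^ (2 ^ (m + 1) * 2 ^ (m + 1)) = y := by
      rw [pow_mul, hy, hy]
    have he : 2 ^ (m + 1) * 2 ^ (m + 1) = 2 ^ (2 * m) * 4 := by
      rw [← pow_add, show (4 : ℕ) = 2 ^ 2 from rfl, ← pow_add]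
      congr 1
      omega
    rw [he, pow_mul, hY] at h1
    exact h1
  -- characterization of solutions
  have hsol : ∀ x : F,
      (b ^ 3 * x ^ 2 ^ (m + 1) + b ^ 2 ^ (m + 1) * b ^ 2 * x = 0) ↔
        (x = 0 ∨ x = b ∨ x = a ∨ x = a + b) := by
    intro x
    constructor
    · intro h
      set y : F := x / b with hy
      have hx : x = y * b := by rw [hy, div_mul_cancel₀ _ hbne]
      rw [hx, mul_pow] at h
      have hB : b ^ 2 ^ (m + 1) * b ^ 3 ≠ 0 :=
        mul_ne_zero (pow_ne_zero _ hbne) (pow_ne_zero _ hbne)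
      have hsum : y ^ 2 ^ (m + 1) + y = 0 := by
        have hfac : b ^ 2 ^ (m + 1) * b ^ 3 * (y ^ 2 ^ (m + 1) + y) = 0 := by
          linear_combination h
        exact (mul_eq_zero.mp hfac).resolve_left hB
      have hyfix : y ^ 2 ^ (m + 1) = y := by
        linear_combination hsum - y * h2
      have h4 := hy4 y hyfix
      have hfac4 : y * ((y - 1) * (y ^ 2 + y + 1)) = 0 := by
        linear_combination h4
      rcases mul_eq_zero.mp hfac4 with h0 | hrest
      · left; rw [hx, h0, zero_mul]
      rcases mul_eq_zero.mp hrest with h1 | hq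
      · right; left
        have : y = 1 := by linear_combination h1
        rw [hx, this, one_mul]
      rcases roots y hq with hyc | hyc
      · right; right; left
        rw [hx, hyc, ha]
      · right; right; right
        rw [hx, hyc, ha]
        ring
    · intro h
      rcases h with h | h | h | h
      · rw [h, zero_pow (pow_ne_zero _ two_ne_zero), mul_zero, mul_zero, add_zero]
      · rw [h]
        linear_combination (b ^ 2 ^ (m + 1) * b ^ 3) * h2
      · rw [h, ha, mul_pow, hcq]
        linear_combination (c * b ^ 2 ^ (m + 1) * b ^ 3) * h2
      · rw [h, ha, hfr (m + 1), mul_pow, hcq]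
        linear_combination ((c + 1) * b ^ 2 ^ (m + 1) * b ^ 3) * h2
  -- the solution set
  have hset : (Finset.univ.filter (fun x : F =>
      (x + a + b) ^ (2 ^ (m + 1) + 3) + (x + b) ^ (2 ^ (m + 1) + 3) +
        (x + a) ^ (2 ^ (m + 1) + 3) + x ^ (2 ^ (m + 1) + 3) = 0))
      = ({0, b, a, a + b} : Finset F) := by
    ext x
    simp only [Finset.mem_filter, Finset.mem_univ, true_and, Finset.mem_insert,
      Finset.mem_singleton]
    rw [key x]
    exact hsol x
  rw [hset]
  -- distinctness
  have hab' : a ≠ b := by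
    intro h
    apply hc1
    rw [ha] at h
    exact mul_right_cancel₀ hbne (by rw [h, one_mul])
  have h1 : (0 : F) ∉ ({b, a, a + b} : Finset F) := by
    simp only [Finset.mem_insert, Finset.mem_singleton]
    push_neg
    exact ⟨Ne.symm hbne, Ne.symm hane, Ne.symm habne⟩
  have h2' : b ∉ ({a, a + b} : Finset F) := by
    simp only [Finset.mem_insert, Finset.mem_singleton]
    push_neg
    refine ⟨Ne.symm hab', fun h => hane ?_⟩
    have : a + b - b = b - b := by rw [← h]
    simpa using this
  have h3 : a ∉ ({a + b} : Finset F) := by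
    simp only [Finset.mem_singleton]
    intro h
    apply hbne
    have : a + b - a = a - a := by rw [← h]
    simpa using this
  rw [Finset.card_insert_of_notMem h1, Finset.card_insert_of_notMem h2',
    Finset.card_insert_of_notMem h3, Finset.card_singleton]
end

section
/- Let m ≥ 1, n = 2m, and let F(x) = x^{2^{m+1}+3} on F_{2^n}. Let a, b ∈ F_{2^n} with ab(a+b) ≠ 0, set c = a/b, and assume c^{2^m} ≠ c and c^2 + c + 1 ≠ 0. Put a_0 = ((c^{2^m}+c^2)/(c^{2^m}+c))^4 + (c^{2^{m+1}}+c)(c^4+c)/(c^{2^m}+c)^2, a_1 = c^2 + c, ω_1 = a_0/a_1^2, ω_2 = a_0 c^2/a_1^2, ω_3 = a_0 (c+1)^2/a_1^2, and assume a_0 ≠ 0. If Tr_1^n(ω_i) = 1 for some i ∈ {1,2,3}, then ∇_F(a,b) = 0. -/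
set_option maxHeartbeats 1000000

theorem stmt_7 (m n : ℕ) (hm : 1 ≤ m) (hn : n = 2 * m)
    (F : Type) [Field F] [Fintype F] [DecidableEq F]
    (hcard : Fintype.card F = 2 ^ n)
    (a b : F) (hab : a * b * (a + b) ≠ 0)
    (c : F) (hc : c = a / b) (hsub : c ^ 2 ^ m ≠ c) (hroot : c ^ 2 + c + 1 ≠ 0)
    (a₀ a₁ ω₁ ω₂ ω₃ : F)
    (ha₀ : a₀ = ((c ^ 2 ^ m + c ^ 2) / (c ^ 2 ^ m + c)) ^ 4 +
      (c ^ 2 ^ (m + 1) + c) * (c ^ 4 + c) / (c ^ 2 ^ m + c) ^ 2)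
    (ha₁ : a₁ = c ^ 2 + c)
    (hω₁ : ω₁ = a₀ / a₁ ^ 2) (hω₂ : ω₂ = a₀ * c ^ 2 / a₁ ^ 2)
    (hω₃ : ω₃ = a₀ * (c + 1) ^ 2 / a₁ ^ 2)
    (ha₀ne : a₀ ≠ 0)
    (htr : (∑ i ∈ Finset.range n, ω₁ ^ 2 ^ i = 1) ∨
           (∑ i ∈ Finset.range n, ω₂ ^ 2 ^ i = 1) ∨
           (∑ i ∈ Finset.range n, ω₃ ^ 2 ^ i = 1)) :
    (Finset.univ.filter (fun x : F =>
      (x + a + b) ^ (2 ^ (m + 1) + 3) + (x + b) ^ (2 ^ (m + 1) + 3) +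
        (x + a) ^ (2 ^ (m + 1) + 3) + x ^ (2 ^ (m + 1) + 3) = 0)).card = 0 := by
  -- characteristic 2
  have hn0 : n ≠ 0 := by omega
  have h2 : (2 : F) = 0 := by
    have hcc : ((Fintype.card F : ℕ) : F) = 0 := FiniteField.cast_card_eq_zero F
    rw [hcard] at hcc
    push_cast at hcc
    exact pow_eq_zero_iff hn0 |>.mp hcc
  haveI : CharP F 2 := (CharP.charP_iff_prime_eq_zero Nat.prime_two).mpr h2
  -- basic nonzero facts
  have ha : a ≠ 0 := left_ne_zero_of_mul (left_ne_zero_of_mul hab)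
  have hb : b ≠ 0 := right_ne_zero_of_mul (left_ne_zero_of_mul hab)
  have hab' : a + b ≠ 0 := right_ne_zero_of_mul hab
  have hc0 : c ≠ 0 := by rw [hc]; exact div_ne_zero ha hb
  have hc1 : c + 1 ≠ 0 := by
    rw [hc]; intro h; apply hab'
    field_simp at h
    simpa using h
  have ha1ne : c ^ 2 + c ≠ 0 := by
    have hfac : c ^ 2 + c = c * (c + 1) := by ring
    rw [hfac]; exact mul_ne_zero hc0 hc1
  have hBne : b ^ 2 ^ m ≠ 0 := pow_ne_zero _ hb
  have hec : c ^ 2 ^ m + c ≠ 0 := by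
    intro h; exact hsub (by linear_combination h - c * h2)
  -- Frobenius facts
  have hadd : ∀ u v : F, (u + v) ^ 2 ^ m = u ^ 2 ^ m + v ^ 2 ^ m := fun u v =>
    add_pow_char_pow ..
  have hcardpow : ∀ u : F, (u ^ 2 ^ m) ^ 2 ^ m = u := by
    intro u
    rw [← pow_mul, ← pow_add, ← two_mul, ← hn, ← hcard]
    exact FiniteField.pow_card u
  have hsq : ∀ v : F, (v ^ 2) ^ 2 ^ m = (v ^ 2 ^ m) ^ 2 := fun v => by
    rw [← pow_mul, mul_comm, pow_mul]
  -- the trace lemma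
  have htr0 : ∀ w : F, (∃ y : F, y ^ 2 + y = w) → ∑ i ∈ Finset.range n, w ^ 2 ^ i = 0 := by
    rintro w ⟨y, rfl⟩
    have hterm : ∀ i : ℕ, (y ^ 2 + y) ^ 2 ^ i = y ^ 2 ^ (i + 1) + y ^ 2 ^ i := by
      intro i
      rw [add_pow_char_pow, ← pow_mul, ← pow_succ']
    rw [Finset.sum_congr rfl fun i _ => hterm i, Finset.sum_add_distrib]
    have hshift : ∑ i ∈ Finset.range n, y ^ 2 ^ (i + 1) = ∑ i ∈ Finset.range n, y ^ 2 ^ i := by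
      have h1' := Finset.sum_range_succ' (fun i => y ^ 2 ^ i) n
      have h2' := Finset.sum_range_succ (fun i => y ^ 2 ^ i) n
      have hyn : y ^ 2 ^ n = y := by rw [← hcard]; exact FiniteField.pow_card y
      rw [h2', hyn] at h1'
      simpa using h1'.symm
    rw [hshift, ← two_mul, h2, zero_mul]
  -- main part
  rw [Finset.card_eq_zero, Finset.filter_eq_empty_iff]
  intro x _ hx
  have hexp : ∀ y : F, y ^ (2 ^ (m + 1) + 3) = (y ^ 2 ^ m) ^ 2 * y ^ 3 := by
    intro y; rw [pow_add, pow_succ, pow_mul]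
  simp only [hexp] at hx
  simp only [hadd] at hx
  -- first reduced equation
  have h1 : (a^2+a*b)*b*(x^2^m)^2 + ((a^2^m)^2*b + a*(b^2^m)^2)*x^2
      + (a^2^m*b + a*b^2^m)^2*x + (a^2+a*b+b^2)*((a^2^m)^2*b + a*(b^2^m)^2) = 0 := by
    linear_combination hx + (-2*x^3*(x^2^m)^2 - 2*(b^2^m)*x^3*(x^2^m) - (b^2^m)^2*x^3 - 2*(a^2^m)*x^3*(x^2^m) - (a^2^m)*(b^2^m)*x^3 - (a^2^m)^2*x^3 - 3*b*x^2*(x^2^m)^2 - 6*b*(b^2^m)*x^2*(x^2^m) - 3*b*(b^2^m)^2*x^2 - 3*b*(a^2^m)*x^2*(x^2^m) - 3*b*(a^2^m)*(b^2^m)*x^2 - b*(a^2^m)^2*x^2 - 3*b^2*x*(x^2^m)^2 - 6*b^2*(b^2^m)*x*(x^2^m) - 3*b^2*(b^2^m)^2*x - 3*b^2*(a^2^m)*x*(x^2^m) - 3*b^2*(a^2^m)*(b^2^m)*x - b^2*(a^2^m)^2*x - b^3*(x^2^m)^2 - 2*b^3*(b^2^m)*(x^2^m) - b^3*(b^2^m)^2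 - b^3*(a^2^m)*(x^2^m) - b^3*(a^2^m)*(b^2^m) - 3*a*x^2*(x^2^m)^2 - 3*a*(b^2^m)*x^2*(x^2^m) - a*(b^2^m)^2*x^2 - 6*a*(a^2^m)*x^2*(x^2^m) - 3*a*(a^2^m)*(b^2^m)*x^2 - 3*a*(a^2^m)^2*x^2 - 3*a*b*x*(x^2^m)^2 - 6*a*b*(b^2^m)*x*(x^2^m) - 3*a*b*(b^2^m)^2*x - 6*a*b*(a^2^m)*x*(x^2^m) - 5*a*b*(a^2^m)*(b^2^m)*x - 3*a*b*(a^2^m)^2*x - a*b^2*(x^2^m)^2 - 3*a*b^2*(b^2^m)*(x^2^m) - a*b^2*(b^2^m)^2 - 3*a*b^2*(a^2^m)*(x^2^m) - 3*a*b^2*(a^2^m)*(b^2^m) - a*b^2*(a^2^m)^2 - 3*a^2*x*(x^2^m)^2 - 3*a^2*(b^2^m)*x*(x^2^m) - a^2*(b^2^m)^2*x - 6*a^2*(a^2^m)*x*(x^2^m) - 3*a^2*(a^2^m)*(b^2^m)*x - 3*a^2*(a^2^m)^2*x - a^2*b*(x^2^m)^2 - 3*a^2*b*(b^2^m)*(x^2^m)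 - a^2*b*(b^2^m)^2 - 3*a^2*b*(a^2^m)*(x^2^m) - 3*a^2*b*(a^2^m)*(b^2^m) - a^2*b*(a^2^m)^2 - a^3*(x^2^m)^2 - a^3*(b^2^m)*(x^2^m) - 2*a^3*(a^2^m)*(x^2^m) - a^3*(a^2^m)*(b^2^m) - a^3*(a^2^m)^2) * h2
    -- pass to c-level equation P1
  have hab2 : a = c * b := by rw [hc]; field_simp
  obtain ⟨w, hw⟩ : ∃ w : F, x = w * b := ⟨x / b, by field_simp⟩
  rw [hw, hab2] at h1
  simp only [mul_pow] at h1
  have hP1 : (c^2+c)*((w^2^m)^2) + ((c^2^m)^2+c)*w^2 + (c^2^m+c)^2*w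
      + (c^2+c+1)*((c^2^m)^2+c) = 0 := by
    have h0 : ((b^2^m)^2*b^3) * ((c^2+c)*((w^2^m)^2) + ((c^2^m)^2+c)*w^2 + (c^2^m+c)^2*w
        + (c^2+c+1)*((c^2^m)^2+c)) = 0 := by linear_combination h1
    exact (mul_eq_zero.mp h0).resolve_left (mul_ne_zero (pow_ne_zero _ hBne) (pow_ne_zero _ hb))
  -- its Frobenius conjugate P2
  have hP2 : ((c^2^m)^2+(c^2^m))*w^2 + (c^2+(c^2^m))*((w^2^m)^2)
      + (c^2^m+c)^2*(w^2^m) + ((c^2^m)^2+(c^2^m)+1)*(c^2+(c^2^m)) = 0 := by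
    have hfr := congrArg (· ^ 2 ^ m) hP1
    simp only [zero_pow (pow_ne_zero m (two_ne_zero)), hadd, mul_pow, hsq, one_pow,
      hcardpow c, hcardpow w] at hfr
    linear_combination hfr
  -- the linear relation L4
  have hL4 : (c^2^m+c)^2*w^2 + (c^2+c^2^m)*(c^2^m+c)*w
      + (c^2+c)*(c^2^m+c)*(w^2^m) + (c^2^m+c^2)^2 = 0 := by
    have h0 : (c^2^m + c) * ((c^2^m+c)^2*w^2 + (c^2+c^2^m)*(c^2^m+c)*w
        + (c^2+c)*(c^2^m+c)*(w^2^m) + (c^2^m+c^2)^2) = 0 := by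
      linear_combination (c^2+c^2^m) * hP1 + (c^2+c) * hP2 + (-c*(c^2^m) - c*(c^2^m)*(w^2^m)^2 - c*(c^2^m)*w^2 + c*(c^2^m)^2*w^2 - c*(c^2^m)^3 - c^2*(c^2^m) - c^2*(c^2^m)*(w^2^m)^2 + c^2*(c^2^m)*w^2 - c^2*(c^2^m)^2*w^2 - c^2*(c^2^m)^3 - c^3 - c^3*(w^2^m)^2 - c^3*(c^2^m)^2 - c^4 - c^4*(w^2^m)^2 - c^4*(c^2^m)^2) * h2
    exact (mul_eq_zero.mp h0).resolve_left hec
  -- cleared form of a₀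
  have hm1 : c ^ 2 ^ (m+1) = (c ^ 2 ^ m) ^ 2 := by rw [pow_succ, pow_mul]
  have ha0cl : a₀ * (c^2^m+c)^4 = (c^2^m+c^2)^4 + ((c^2^m)^2+c)*(c^4+c)*(c^2^m+c)^2 := by
    rw [ha₀, hm1]
    field_simp
  -- the quartic
  have hQ4 : (c^2^m+c)^4 * (w^4 + (c^2+c+1)*w^2 + (c^2+c)*w + a₀) = 0 := by
    linear_combination (c^2+c)*(c^2^m+c)^2 * hP1
      + ((c^2^m+c)^2*w^2 + (c^2+c^2^m)*(c^2^m+c)*w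
        + (c^2+c)*(c^2^m+c)*(w^2^m) + (c^2^m+c^2)^2) * hL4
      + ha0cl + (-(c^2^m)^4*w - (c^2^m)^4*w^2 - (c^2^m)^4*w^3 - c*(c^2^m)^3*(w^2^m) - c*(c^2^m)^3*w - c*(c^2^m)^3*w*(w^2^m) - c*(c^2^m)^3*w^2 - c*(c^2^m)^3*w^2*(w^2^m) - 3*c*(c^2^m)^3*w^3 - c^2*(c^2^m)^2*(w^2^m) - c^2*(c^2^m)^2*(w^2^m)^2 - 2*c^2*(c^2^m)^2*w*(w^2^m) + c^2*(c^2^m)^2*w^2 - 3*c^2*(c^2^m)^2*w^2*(w^2^m) - 3*c^2*(c^2^m)^2*w^3 - c^2*(c^2^m)^3*(w^2^m) - 3*c^2*(c^2^m)^3*w - c^2*(c^2^m)^3*w*(w^2^m) - 2*c^2*(c^2^m)^3*w^2 - c^2*(c^2^m)^3*w^2*(w^2^m) - c^2*(c^2^m)^3*w^3 - c^2*(c^2^m)^4 - 2*c^3*(c^2^m)*(w^2^m)^2 - c^3*(c^2^m)*w*(w^2^m) + c^3*(c^2^m)*w^2 - 3*c^3*(c^2^m)*w^2*(w^2^m) -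 c^3*(c^2^m)*w^3 - c^3*(c^2^m)^2 - 3*c^3*(c^2^m)^2*(w^2^m) - 2*c^3*(c^2^m)^2*(w^2^m)^2 - 3*c^3*(c^2^m)^2*w - 3*c^3*(c^2^m)^2*w*(w^2^m) - 4*c^3*(c^2^m)^2*w^2 - 3*c^3*(c^2^m)^2*w^2*(w^2^m) - 3*c^3*(c^2^m)^2*w^3 - 2*c^3*(c^2^m)^3 + c^3*(c^2^m)^3*w^2 - c^3*(c^2^m)^4 - c^4*(w^2^m)^2 - c^4*w^2*(w^2^m) - 2*c^4*(c^2^m) - 2*c^4*(c^2^m)*(w^2^m) - 4*c^4*(c^2^m)*(w^2^m)^2 - 3*c^4*(c^2^m)*w*(w^2^m) - 2*c^4*(c^2^m)*w^2 - 3*c^4*(c^2^m)*w^2*(w^2^m) - 3*c^4*(c^2^m)*w^3 - 2*c^4*(c^2^m)^2 - 2*c^4*(c^2^m)^2*(w^2^m) - c^4*(c^2^m)^2*(w^2^m)^2 - 3*c^4*(c^2^m)^2*w - c^4*(c^2^m)^2*w*(w^2^m) + c^4*(c^2^m)^2*w^2 - 2*c^4*(c^2^m)^3 - c^5 - 2*c^5*(w^2^m)^2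 - c^5*w*(w^2^m) - c^5*w^2*(w^2^m) - c^5*w^3 - 2*c^5*(c^2^m) - 3*c^5*(c^2^m)*(w^2^m) - 2*c^5*(c^2^m)*(w^2^m)^2 - 3*c^5*(c^2^m)*w - 2*c^5*(c^2^m)*w*(w^2^m) - c^5*(c^2^m)*w^2 - c^5*(c^2^m)^2 - c^6 - c^6*(w^2^m) - c^6*(w^2^m)^2 - c^6*w*(w^2^m) - c^6*w^2 - c^6*(c^2^m)*(w^2^m) - c^6*(c^2^m)*w - c^7*(w^2^m) - c^7*w) * h2
  have hQ : w^4 + (c^2+c+1)*w^2 + (c^2+c)*w + a₀ = 0 :=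
    (mul_eq_zero.mp hQ4).resolve_left (pow_ne_zero _ hec)
  -- quartic root gives solutions of y^2 + y = ωᵢ
  have hy : ∀ r : F, r^3 + (c^2+c+1)*r + (c^2+c) = 0 →
      ∃ y : F, y^2 + y = a₀ * r^2 / (c^2+c)^2 := by
    intro r hr
    refine ⟨r*(w^2 + r*w)/(c^2+c), ?_⟩
    rw [div_pow, div_add_div _ _ (pow_ne_zero 2 ha1ne) ha1ne,
      div_eq_div_iff (mul_ne_zero (pow_ne_zero 2 ha1ne) ha1ne) (pow_ne_zero 2 ha1ne)]
    linear_combination (c^2+c)^3 * ((-r^2) * hQ + (r*w^2) * hr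
      + (r^2*w^4 + r^3*w^3 + r^2*(c^2+c)*w) * h2)
  -- conclude via the trace conditions
  rcases htr with h | h | h
  · obtain ⟨y, hy1⟩ := hy 1 (by linear_combination (c^2+c+1) * h2)
    have h0 := htr0 ω₁ ⟨y, by rw [hω₁, ha₁]; linear_combination hy1⟩
    exact zero_ne_one (h0.symm.trans h)
  · obtain ⟨y, hy1⟩ := hy c (by linear_combination (c^3+c^2+c) * h2)
    have h0 := htr0 ω₂ ⟨y, by rw [hω₂, ha₁]; linear_combination hy1⟩
    exact zero_ne_one (h0.symm.trans h)
  · obtain ⟨y, hy1⟩ := hy (c+1) (by linear_combination (c^3+3*c^2+3*c+1) * h2)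
    have h0 := htr0 ω₃ ⟨y, by rw [hω₃, ha₁]; linear_combination hy1⟩
    exact zero_ne_one (h0.symm.trans h)
end

section
/- Let m ≥ 2, n = 2m, and let F(x) = x^{2^{m+1}+3} on F_{2^n}. Then F is second-order zero differential 2^m-uniform, i.e. max{∇_F(a,b) : a, b ∈ F_{2^n}\{0}, a ≠ b} = 2^m. -/
open Polynomial Finset

lemma count_le {F : Type} [Field F] [Fintype F] [DecidableEq F] {pr : F → Prop}
    [DecidablePred pr] {d : ℕ} (p : Polynomial F) (hp : p ≠ 0) (hdeg : p.natDegree ≤ d)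
    (h : ∀ x, pr x → p.eval x = 0) : (Finset.univ.filter pr).card ≤ d := by
  refine le_trans (le_trans (Finset.card_le_card ?_) p.roots.toFinset_card_le)
    (le_trans (Polynomial.card_roots' p) hdeg)
  intro x hx
  rw [Multiset.mem_toFinset, Polynomial.mem_roots hp]
  exact h x ((Finset.mem_filter.mp hx).2)

lemma subfield_count {F : Type} [Field F] [Fintype F] [DecidableEq F] (q : ℕ) (hq : 2 ≤ q)
    (h2 : (2:F) = 0) (hfrob : ∀ u v : F, (u+v)^q = u^q + v^q) (hfq : ∀ z : F, (z^q)^q = z)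
    (hcard : Fintype.card F = q*q) :
    (Finset.univ.filter fun y : F => y^q = y).card = q ∧
      ∀ w : F, w^q = w → (Finset.univ.filter fun x : F => x^q + x = w).card = q := by
  have hq0 : q ≠ 0 := by omega
  have hq1 : q ≠ 1 := by omega
  have hKle : (Finset.univ.filter fun y : F => y^q = y).card ≤ q := by
    apply count_le (p := Polynomial.X^q - Polynomial.X)
    · intro h0
      have hc := congrArg (fun p => Polynomial.coeff p q) h0
      simp only [Polynomial.coeff_sub, Polynomial.coeff_X_pow, if_pos rfl,
        Polynomial.coeff_X, Polynomial.coeff_zero] at hc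
      rw [if_neg (by omega : ¬1 = q)] at hc
      norm_num at hc
    · exact le_trans (Polynomial.natDegree_sub_le _ _)
        (by simp only [Polynomial.natDegree_X_pow, Polynomial.natDegree_X, max_le_iff]
            omega)
    · intro x hx
      simp only [Polynomial.eval_sub, Polynomial.eval_pow, Polynomial.eval_X]
      exact sub_eq_zero_of_eq hx
  have hkle : (Finset.univ.filter fun x : F => x^q + x = 0).card ≤ q := by
    apply count_le (p := Polynomial.X^q + Polynomial.X)
    · intro h0
      have hc := congrArg (fun p => Polynomial.coeff p q) h0
      simp only [Polynomial.coeff_add, Polynomial.coeff_X_pow, if_pos rfl,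
        Polynomial.coeff_X, Polynomial.coeff_zero] at hc
      rw [if_neg (by omega : ¬1 = q)] at hc
      norm_num at hc
    · exact le_trans (Polynomial.natDegree_add_le _ _)
        (by simp only [Polynomial.natDegree_X_pow, Polynomial.natDegree_X, max_le_iff]
            omega)
    · intro x hx
      simpa only [Polynomial.eval_add, Polynomial.eval_pow, Polynomial.eval_X] using hx
  set k := (Finset.univ.filter fun x : F => x^q + x = 0).card with hk
  set img := Finset.image (fun x : F => x^q + x) Finset.univ with himgdef
  have himgsub : img ⊆ Finset.univ.filter (fun y : F => y^q = y) := by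
    intro y hy
    obtain ⟨x, -, rfl⟩ := Finset.mem_image.mp hy
    simp only [Finset.mem_filter, Finset.mem_univ, true_and]
    rw [hfrob, hfq]
    ring
  have hfib : ∀ y ∈ img, (Finset.univ.filter fun x : F => x^q + x = y).card = k := by
    intro y hy
    obtain ⟨x0, -, hx0⟩ := Finset.mem_image.mp hy
    rw [hk]
    apply Finset.card_nbij' (i := fun x => x + x0) (j := fun x => x + x0)
    · intro x hx
      simp only [Finset.mem_coe, Finset.mem_filter, Finset.mem_univ, true_and] at hx ⊢
      rw [hfrob]
      linear_combination hx + hx0 + y*h2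
    · intro x hx
      simp only [Finset.mem_coe, Finset.mem_filter, Finset.mem_univ, true_and] at hx ⊢
      rw [hfrob]
      linear_combination hx + hx0
    · intro x _
      linear_combination x0*h2
    · intro x _
      linear_combination x0*h2
  have hcount : q*q = img.card * k := by
    have h1 : (Finset.univ : Finset F).card
        = ∑ y ∈ img, (Finset.univ.filter fun x : F => x^q + x = y).card :=
      Finset.card_eq_sum_card_image _ _
    rw [Finset.card_univ, hcard, Finset.sum_congr rfl hfib, Finset.sum_const,
      smul_eq_mul] at h1
    exact h1
  have himgle : img.card ≤ q := le_trans (Finset.card_le_card himgsub) hKle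
  have hkq : k = q := by
    have h1 : q * q ≤ q * k := by
      rw [hcount]
      exact Nat.mul_le_mul_right k himgle
    exact le_antisymm hkle (Nat.le_of_mul_le_mul_left h1 (by omega))
  have himgq : img.card = q := by
    have h1 : q * q ≤ img.card * q := by
      rw [hcount]
      exact Nat.mul_le_mul_left _ (by omega)
    exact le_antisymm himgle (Nat.le_of_mul_le_mul_right h1 (by omega))
  have himgeq : img = Finset.univ.filter (fun y : F => y^q = y) :=
    Finset.eq_of_subset_of_card_le himgsub (by rw [himgq]; exact hKle)
  constructor
  · rw [← himgeq, himgq]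
  · intro w hw
    have hwmem : w ∈ img := by
      rw [himgeq]
      simp only [Finset.mem_filter, Finset.mem_univ, true_and]
      exact hw
    rw [hfib w hwmem, hkq]



lemma keyid {F : Type} [Field F] (m : ℕ) (h2 : (2:F) = 0)
    (hfrob : ∀ u v : F, (u+v)^(2^(m+1)) = u^(2^(m+1)) + v^(2^(m+1))) (a b x : F) :
    (x + a + b) ^ (2 ^ (m + 1) + 3) + (x + b) ^ (2 ^ (m + 1) + 3) +
      (x + a) ^ (2 ^ (m + 1) + 3) + x ^ (2 ^ (m + 1) + 3)
    = a*b*(a+b)*(x ^ 2 ^ m)^2 + ((a ^ 2 ^ m)^2*b + a*(b ^ 2 ^ m)^2)*x^2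
      + ((a ^ 2 ^ m)^2*b^2 + a^2*(b ^ 2 ^ m)^2)*x
      + ((a ^ 2 ^ m)^2*b + a*(b ^ 2 ^ m)^2)*(a^2+a*b+b^2) := by
  simp only [show ∀ z : F, z^(2^(m+1)+3) = z^(2^(m+1)) * z^3 from fun z => pow_add z _ 3]
  simp only [hfrob (x+a) b, hfrob x a, hfrob x b]
  simp only [show ∀ z : F, z^(2^(m+1)) = (z ^ 2 ^ m)^2 from fun z => by rw [pow_succ, pow_mul]]
  linear_combination (b^3*(b ^ 2 ^ m)^2 + b^3*(x ^ 2 ^ m)^2 + a*b^2*(b ^ 2 ^ m)^2 + a*b^2*(a ^ 2 ^ m)^2 + a*b^2*(x ^ 2 ^ m)^2 + a^2*b*(b ^ 2 ^ m)^2 + a^2*b*(a ^ 2 ^ m)^2 + a^2*b*(x ^ 2 ^ m)^2 + a^3*(a ^ 2 ^ m)^2 + a^3*(x ^ 2 ^ m)^2 + 3*x*b^2*(b ^ 2 ^ m)^2 + x*b^2*(a ^ 2 ^ m)^2 + 3*x*b^2*(x ^ 2 ^ m)^2 + 3*x*a*b*(b ^ 2 ^ m)^2 + 3*x*a*b*(a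 ^ 2 ^ m)^2 + 3*x*a*b*(x ^ 2 ^ m)^2 + x*a^2*(b ^ 2 ^ m)^2 + 3*x*a^2*(a ^ 2 ^ m)^2 + 3*x*a^2*(x ^ 2 ^ m)^2 + 3*x^2*b*(b ^ 2 ^ m)^2 + x^2*b*(a ^ 2 ^ m)^2 + 3*x^2*b*(x ^ 2 ^ m)^2 + x^2*a*(b ^ 2 ^ m)^2 + 3*x^2*a*(a ^ 2 ^ m)^2 + 3*x^2*a*(x ^ 2 ^ m)^2 + x^3*(b ^ 2 ^ m)^2 + x^3*(a ^ 2 ^ m)^2 + 2*x^3*(x ^ 2 ^ m)^2) * h2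


set_option maxHeartbeats 4000000 in
theorem stmt_8 (m n : ℕ) (hm : 2 ≤ m) (hn : n = 2 * m)
    (F : Type) [Field F] [Fintype F] [DecidableEq F]
    (hcard : Fintype.card F = 2 ^ n) :
    IsGreatest {k : ℕ | ∃ a b : F, a ≠ 0 ∧ b ≠ 0 ∧ a ≠ b ∧
      (Finset.univ.filter (fun x : F =>
        (x + a + b) ^ (2 ^ (m + 1) + 3) + (x + b) ^ (2 ^ (m + 1) + 3) +
          (x + a) ^ (2 ^ (m + 1) + 3) + x ^ (2 ^ (m + 1) + 3) = 0)).card = k}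
      (2 ^ m) := by
  subst hn
  obtain ⟨p, hcp⟩ := CharP.exists F
  haveI := hcp
  obtain ⟨kk, hpp, hFq⟩ := FiniteField.card F p
  have hp2 : p = 2 := by
    have he : (2:ℕ)^(2*m) = p^(kk:ℕ) := by rw [← hcard, hFq]
    have hdvd : p ∣ 2^(2*m) := he ▸ dvd_pow_self p kk.ne_zero
    exact (Nat.prime_dvd_prime_iff_eq hpp Nat.prime_two).mp (hpp.dvd_of_dvd_pow hdvd)
  subst hp2
  haveI hfact : Fact (Nat.Prime 2) := ⟨Nat.prime_two⟩
  have h2 : (2:F) = 0 := by exact_mod_cast CharP.cast_eq_zero F 2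
  have hrc : ringChar F = 2 := ringChar.eq F 2
  have hfrob : ∀ u v : F, (u+v)^(2^m) = u^(2^m)+v^(2^m) := fun u v =>
    add_pow_char_pow u v 2 m
  have hfrobS : ∀ u v : F, (u+v)^(2^(m+1)) = u^(2^(m+1))+v^(2^(m+1)) := fun u v =>
    add_pow_char_pow u v 2 (m+1)
  have hq2 : 2 ≤ 2^m := by
    calc 2 = 2^1 := (pow_one 2).symm
    _ ≤ 2^m := Nat.pow_le_pow_right (by omega) (by omega)
  have hq4 : 4 ≤ 2^m := by
    calc 4 = 2^2 := by norm_num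
    _ ≤ 2^m := Nat.pow_le_pow_right (by omega) hm
  have hfq : ∀ z : F, (z^(2^m))^(2^m) = z := by
    intro z
    rw [← pow_mul, show 2^m * 2^m = Fintype.card F by rw [hcard, two_mul, pow_add]]
    exact FiniteField.pow_card z
  obtain ⟨hKcard, hfiber⟩ := subfield_count (2^m) hq2 h2 hfrob hfq
    (by rw [hcard, two_mul, pow_add])
  constructor
  · -- membership : the value 2^m is attained
    have hpick : ∃ a : F, a^(2^m) = a ∧ a ≠ 0 ∧ a ≠ 1 := by
      have hsd := Finset.le_card_sdiff ({0,1} : Finset F)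
        (Finset.univ.filter fun y : F => y^(2^m) = y)
      have hc01 : ({0,1} : Finset F).card ≤ 2 :=
        le_trans (Finset.card_insert_le _ _) (by simp)
      have hpos : 0 < ((Finset.univ.filter fun y : F => y^(2^m) = y) \
          ({0,1} : Finset F)).card := by omega
      obtain ⟨a, ha⟩ := Finset.card_pos.mp hpos
      rw [Finset.mem_sdiff, Finset.mem_filter, Finset.mem_insert, Finset.mem_singleton] at ha
      exact ⟨a, ha.1.2, fun h => ha.2 (Or.inl h), fun h => ha.2 (Or.inr h)⟩
    obtain ⟨a, haq, ha0, ha1⟩ := hpick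
    refine ⟨a, 1, ha0, one_ne_zero, ha1, ?_⟩
    have ha1' : a + 1 ≠ 0 := fun h0 => ha1 (by linear_combination h0 - h2)
    obtain ⟨w, hw⟩ := FiniteField.isSquare_of_char_two hrc (a*a + a + 1)
    have hwq : w^(2^m) = w := by
      have h1 : (w^(2^m))*(w^(2^m)) = w*w := by
        rw [show (w^(2^m))*(w^(2^m)) = (w*w)^(2^m) by ring, ← hw]
        rw [hfrob, hfrob, one_pow, show a*a = a^2 by ring,
          show (a^2)^(2^m) = (a^(2^m))^2 by rw [← pow_mul, mul_comm, pow_mul], haq]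
      have h0 : (w^(2^m) - w)*(w^(2^m) - w) = 0 := by linear_combination h1 + (w*w - w^(2^m)*w)*h2
      have := mul_self_eq_zero.mp h0
      linear_combination this
    have hiff : ∀ x : F, ((x + a + 1) ^ (2 ^ (m + 1) + 3) + (x + 1) ^ (2 ^ (m + 1) + 3) +
        (x + a) ^ (2 ^ (m + 1) + 3) + x ^ (2 ^ (m + 1) + 3) = 0) ↔ x^(2^m) + x = w := by
      intro x
      rw [keyid m h2 hfrobS a 1 x]
      have heq : a*1*(a+1)*(x ^ 2 ^ m)^2 + ((a ^ 2 ^ m)^2*1 + a*(1 ^ 2 ^ m)^2)*x^2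
          + ((a ^ 2 ^ m)^2*1^2 + a^2*(1 ^ 2 ^ m)^2)*x
          + ((a ^ 2 ^ m)^2*1 + a*(1 ^ 2 ^ m)^2)*(a^2+a*1+1^2)
          = a*(a+1)*((x^(2^m) + x + w)*(x^(2^m) + x + w)) := by
        linear_combination ((a ^ 2 ^ m) + a + a*(a ^ 2 ^ m) + a^2 + a^2*(a ^ 2 ^ m) + a^3 + x*(a ^ 2 ^ m) + x*a + x^2*(a ^ 2 ^ m) + x^2*a)*haq + (a + a^2)*hw + ((-1)*(x ^ 2 ^ m)*a*w + (-1)*(x ^ 2 ^ m)*a^2*w + (-1)*x*a*w + x*a^2 + (-1)*x*a^2*w + (-1)*x*(x ^ 2 ^ m)*a + (-1)*x*(x ^ 2 ^ m)*a^2)*h2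
      rw [heq]
      constructor
      · intro h
        rcases mul_eq_zero.mp h with h' | h'
        · rcases mul_eq_zero.mp h' with h'' | h''
          · exact absurd h'' ha0
          · exact absurd h'' ha1'
        · have h3 := mul_self_eq_zero.mp h'
          linear_combination h3 - w*h2
      · intro h
        have h3 : x^(2^m) + x + w = 0 := by linear_combination h + w*h2
        rw [h3]
        ring
    rw [Finset.filter_congr (fun x _ => hiff x)]
    exact hfiber w hwq
  · -- upper bound
    rintro k ⟨a, b, ha, hb, hab, hk⟩
    rw [← hk]
    have hab' : a + b ≠ 0 := fun h0 => hab (by linear_combination h0 - b*h2)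
    obtain ⟨A, hA⟩ : ∃ A : F, a^(2^m) = A := ⟨_, rfl⟩
    obtain ⟨B, hB⟩ : ∃ B : F, b^(2^m) = B := ⟨_, rfl⟩
    have hAa : A^(2^m) = a := by rw [← hA]; exact hfq a
    have hBb : B^(2^m) = b := by rw [← hB]; exact hfq b
    by_cases hcase : A*b = a*B
    · -- a/b in the subfield : degree 2^m bound
      obtain ⟨u, hu⟩ := FiniteField.isSquare_of_char_two hrc (a*(a+b)*A*(A+B))
      obtain ⟨w, hw⟩ := FiniteField.isSquare_of_char_two hrc (a*(a+b)*A*(A+B)*(a^2+a*b+b^2))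
      apply count_le (p := Polynomial.C (a*(a+b)) * Polynomial.X^(2^m)
        + (Polynomial.C u * Polynomial.X + Polynomial.C w))
      · intro h0
        have hc := congrArg (fun p => Polynomial.coeff p (2^m)) h0
        simp only [Polynomial.coeff_add, Polynomial.coeff_C_mul, Polynomial.coeff_X_pow,
          if_pos rfl, Polynomial.coeff_X, Polynomial.coeff_C, Polynomial.coeff_zero] at hc
        rw [if_neg (show ¬1 = 2^m by omega), if_neg (show ¬2^m = 0 by omega)] at hc
        simp only [if_true, eq_self_iff_true, mul_one, mul_zero, add_zero, zero_add] at hc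
        exact mul_ne_zero ha hab' hc
      · refine le_trans (Polynomial.natDegree_add_le _ _) (max_le ?_ ?_)
        · exact le_trans (Polynomial.natDegree_C_mul_le _ _)
            (le_of_eq (Polynomial.natDegree_X_pow _))
        · refine le_trans (Polynomial.natDegree_add_le _ _) (max_le ?_ ?_)
          · exact le_trans (Polynomial.natDegree_C_mul_le _ _)
              (le_trans Polynomial.natDegree_X_le (by omega))
          · exact le_trans (le_of_eq (Polynomial.natDegree_C _)) (by omega)
      · intro x hx
        rw [keyid m h2 hfrobS a b x] at hx
        obtain ⟨y, hxy⟩ : ∃ y : F, x^(2^m) = y := ⟨_, rfl⟩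
        rw [hxy, hA, hB] at hx
        have hbz : b*((a*(a+b)*y + u*x + w)*(a*(a+b)*y + u*x + w)) = 0 := by
          linear_combination (a*(a+b))*hx - (b*x^2)*hu - b*hw + (a*b^3*B + 2*a^2*b^2*B + 2*a^3*b*B + a^4*B + x*a*b^2*A + x*a^2*b*B + x*a^2*b*A + x*a^3*B + x^2*a*b*B + x^2*a^2*B)*hcase + (y*a*b^2*w + y*a^2*b*w + x*b*u*w + (-1)*x*a*b^3*A^2 + (-1)*x*a^2*b^2*A^2 + x*y*a*b^2*u + x*y*a^2*b*u)*h2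
        have hS : a*(a+b)*y + u*x + w = 0 := by
          rcases mul_eq_zero.mp hbz with h' | h'
          · exact absurd h' hb
          · exact mul_self_eq_zero.mp h'
        simp only [Polynomial.eval_add, Polynomial.eval_mul, Polynomial.eval_pow,
          Polynomial.eval_C, Polynomial.eval_X]
        rw [hxy]
        linear_combination hS
    · -- quartic bound
      have hAb : A*b + a*B ≠ 0 := fun h0 => hcase (by linear_combination h0 - a*B*h2)
      refine le_trans (count_le (p := Polynomial.C ((A*b+a*B)^6) * Polynomial.X^4
        + (Polynomial.C ((a^2*B + A*b^2)^2*(A^2*b^2 + a^2*B^2)^2 + a*b*(a+b)*(A^2*b^2 + a^2*B^2)^2*(A^2*b + a*B^2)) * Polynomial.X^2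
        + (Polynomial.C (a*b*(a+b)*(A^2*b^2 + a^2*B^2)^3) * Polynomial.X + Polynomial.C ((a^2*B + A*b^2)^2*((A^2*b + a*B^2)*(a^2+a*b+b^2)+a*b*(a+b)*(A^2+A*B+B^2))^2 + a*b*(a+b)*(A^2*b^2 + a^2*B^2)^2*(A^2*b + a*B^2)*(a^2+a*b+b^2))))) ?_ ?_ ?_) hq4
      · intro h0
        have hc := congrArg (fun p => Polynomial.coeff p 4) h0
        simp only [Polynomial.coeff_add, Polynomial.coeff_C_mul, Polynomial.coeff_X_pow,
          Polynomial.coeff_X, Polynomial.coeff_C, Polynomial.coeff_zero] at hc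
        norm_num at hc
        exact absurd hc hAb
      · refine le_trans (Polynomial.natDegree_add_le _ _) (max_le ?_ ?_)
        · exact le_trans (Polynomial.natDegree_C_mul_le _ _)
            (le_of_eq (Polynomial.natDegree_X_pow _))
        · refine le_trans (Polynomial.natDegree_add_le _ _) (max_le ?_ ?_)
          · exact le_trans (Polynomial.natDegree_C_mul_le _ _)
              (by rw [Polynomial.natDegree_X_pow]; omega)
          · refine le_trans (Polynomial.natDegree_add_le _ _) (max_le ?_ ?_)
            · exact le_trans (Polynomial.natDegree_C_mul_le _ _)
                (le_trans Polynomial.natDegree_X_le (by omega))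
            · exact le_trans (le_of_eq (Polynomial.natDegree_C _)) (by omega)
      · intro x hx
        rw [keyid m h2 hfrobS a b x] at hx
        obtain ⟨y, hxy⟩ : ∃ y : F, x^(2^m) = y := ⟨_, rfl⟩
        rw [hxy, hA, hB] at hx
        have hyx : y^(2^m) = x := by rw [← hxy]; exact hfq x
        have e1 : (a*b*(a+b)*y^2 + (A^2*b + a*B^2)*x^2 + (A^2*b^2 + a^2*B^2)*x
            + (A^2*b + a*B^2)*(a^2+a*b+b^2))^(2^m) = 0 := by
          rw [hx]
          exact zero_pow (by omega)
        have pow2q : ∀ z : F, (z^2)^(2^m) = (z^(2^m))^2 := fun z => by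
          rw [← pow_mul, mul_comm, pow_mul]
        simp only [hfrob, mul_pow, pow2q, hxy, hyx, hA, hB, hAa, hBb] at e1
        have hE2 : A*B*(A+B)*x^2 + (a^2*B + A*b^2)*y^2 + (A^2*b^2 + a^2*B^2)*y + (a^2*B + A*b^2)*(A^2+A*B+B^2) = 0 := by linear_combination e1
        have hlin : a*b*(a+b)*(A^2*b^2 + a^2*B^2)*y = (((A^2*b + a*B^2)*(a^2*B + A*b^2)+a*b*(a+b)*A*B*(A+B))*x^2 + (a^2*B + A*b^2)*(A^2*b^2 + a^2*B^2)*x + (a^2*B + A*b^2)*((A^2*b + a*B^2)*(a^2+a*b+b^2)+a*b*(a+b)*(A^2+A*B+B^2))) := by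
          linear_combination (a^2*B + A*b^2)*hx + a*b*(a+b)*hE2 + ((-1)*b^5*A^3 + (-2)*a*b^4*A*B^2 + (-1)*a*b^4*A^2*B + (-2)*a*b^4*A^3 + (-2)*a^2*b^3*A*B^2 + (-2)*a^2*b^3*A^2*B + (-2)*a^2*b^3*A^3 + (-2)*a^3*b^2*B^3 + (-2)*a^3*b^2*A*B^2 + (-2)*a^3*b^2*A^2*B + (-2)*a^4*b*B^3 + (-1)*a^4*b*A*B^2 + (-2)*a^4*b*A^2*B + (-1)*a^5*B^3 + (-1)*y^2*a*b^4*A + (-1)*y^2*a^2*b^3*A + (-1)*y^2*a^3*b^2*B + (-1)*y^2*a^4*b*B + (-1)*x*b^4*A^3 + (-1)*x*a^2*b^2*A*B^2 + (-1)*x*a^2*b^2*A^2*B + (-1)*x*a^4*B^3 + (-1)*x^2*b^3*A^3 + (-2)*x^2*a*b^2*A*B^2 + (-1)*x^2*a*b^2*A^2*B + (-1)*x^2*a^2*b*A*B^2 + (-2)*x^2*a^2*b*A^2*B + (-1)*x^2*a^3*B^3)*h2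
        have hquart : (A*b+a*B)^6*x^4 + ((a^2*B + A*b^2)^2*(A^2*b^2 + a^2*B^2)^2 + a*b*(a+b)*(A^2*b^2 + a^2*B^2)^2*(A^2*b + a*B^2))*x^2 + (a*b*(a+b)*(A^2*b^2 + a^2*B^2)^3)*x + ((a^2*B + A*b^2)^2*((A^2*b + a*B^2)*(a^2+a*b+b^2)+a*b*(a+b)*(A^2+A*B+B^2))^2 + a*b*(a+b)*(A^2*b^2 + a^2*B^2)^2*(A^2*b + a*B^2)*(a^2+a*b+b^2)) = 0 := by
          linear_combination (a*b*(a+b)*(A^2*b^2 + a^2*B^2)*y + (((A^2*b + a*B^2)*(a^2*B + A*b^2)+a*b*(a+b)*A*B*(A+B))*x^2 + (a^2*B + A*b^2)*(A^2*b^2 + a^2*B^2)*x + (a^2*B + A*b^2)*((A^2*b + a*B^2)*(a^2+a*b+b^2)+a*b*(a+b)*(A^2+A*B+B^2))))*hlin + (a*b*(a+b)*(A^2*b^2 + a^2*B^2)^2)*hx + (b^10*A^6 + 4*a*b^9*A^4*B^2 + 2*a*b^9*A^5*B + 4*a*b^9*A^6 + 4*a^2*b^8*A^2*B^4 + 4*a^2*b^8*A^3*B^3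 + 13*a^2*b^8*A^4*B^2 + 8*a^2*b^8*A^5*B + 8*a^2*b^8*A^6 + 8*a^3*b^7*A^2*B^4 + 16*a^3*b^7*A^3*B^3 + 24*a^3*b^7*A^4*B^2 + 16*a^3*b^7*A^5*B + 8*a^3*b^7*A^6 + 8*a^4*b^6*A*B^5 + 16*a^4*b^6*A^2*B^4 + 32*a^4*b^6*A^3*B^3 + 26*a^4*b^6*A^4*B^2 + 20*a^4*b^6*A^5*B + 4*a^4*b^6*A^6 + 16*a^5*b^5*A*B^5 + 24*a^5*b^5*A^2*B^4 + 44*a^5*b^5*A^3*B^3 + 24*a^5*b^5*A^4*B^2 + 16*a^5*b^5*A^5*B + 4*a^6*b^4*B^6 + 20*a^6*b^4*A*B^5 + 26*a^6*b^4*A^2*B^4 + 32*a^6*b^4*A^3*B^3 + 16*a^6*b^4*A^4*B^2 + 8*a^6*b^4*A^5*B + 8*a^7*b^3*B^6 + 16*a^7*b^3*A*B^5 + 24*a^7*b^3*A^2*B^4 + 16*a^7*b^3*A^3*B^3 + 8*a^7*b^3*A^4*B^2 + 8*a^8*b^2*B^6 + 8*a^8*b^2*A*B^5 + 13*a^8*b^2*A^2*B^4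 + 4*a^8*b^2*A^3*B^3 + 4*a^8*b^2*A^4*B^2 + 4*a^9*b*B^6 + 2*a^9*b*A*B^5 + 4*a^9*b*A^2*B^4 + a^10*B^6 + (-1)*y^2*a^2*b^8*A^4 + (-2)*y^2*a^3*b^7*A^4 + (-2)*y^2*a^4*b^6*A^2*B^2 + (-1)*y^2*a^4*b^6*A^4 + (-4)*y^2*a^5*b^5*A^2*B^2 + (-1)*y^2*a^6*b^4*B^4 + (-2)*y^2*a^6*b^4*A^2*B^2 + (-2)*y^2*a^7*b^3*B^4 + (-1)*y^2*a^8*b^2*B^4 + x*b^9*A^6 + 2*x*a*b^8*A^4*B^2 + x*a*b^8*A^5*B + 2*x*a*b^8*A^6 + 3*x*a^2*b^7*A^4*B^2 + 3*x*a^2*b^7*A^5*B + 2*x*a^2*b^7*A^6 + 2*x*a^3*b^6*A^2*B^4 + 5*x*a^3*b^6*A^3*B^3 + 5*x*a^3*b^6*A^4*B^2 + 4*x*a^3*b^6*A^5*B + 2*x*a^4*b^5*A^2*B^4 + 7*x*a^4*b^5*A^3*B^3 + 5*x*a^4*b^5*A^4*B^2 + 4*x*a^4*b^5*A^5*B + 4*x*a^5*b^4*A*B^5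 + 5*x*a^5*b^4*A^2*B^4 + 7*x*a^5*b^4*A^3*B^3 + 2*x*a^5*b^4*A^4*B^2 + 4*x*a^6*b^3*A*B^5 + 5*x*a^6*b^3*A^2*B^4 + 5*x*a^6*b^3*A^3*B^3 + 2*x*a^6*b^3*A^4*B^2 + 2*x*a^7*b^2*B^6 + 3*x*a^7*b^2*A*B^5 + 3*x*a^7*b^2*A^2*B^4 + 2*x*a^8*b*B^6 + x*a^8*b*A*B^5 + 2*x*a^8*b*A^2*B^4 + x*a^9*B^6 + 2*x^2*b^8*A^6 + 4*x^2*a*b^7*A^4*B^2 + 2*x^2*a*b^7*A^5*B + 2*x^2*a*b^7*A^6 + 4*x^2*a^2*b^6*A^2*B^4 + 4*x^2*a^2*b^6*A^3*B^3 + 10*x^2*a^2*b^6*A^4*B^2 + 8*x^2*a^2*b^6*A^5*B + 2*x^2*a^2*b^6*A^6 + 6*x^2*a^3*b^5*A^2*B^4 + 14*x^2*a^3*b^5*A^3*B^3 + 12*x^2*a^3*b^5*A^4*B^2 + 8*x^2*a^3*b^5*A^5*B + 6*x^2*a^4*b^4*A*B^5 + 10*x^2*a^4*b^4*A^2*B^4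 + 20*x^2*a^4*b^4*A^3*B^3 + 10*x^2*a^4*b^4*A^4*B^2 + 6*x^2*a^4*b^4*A^5*B + 8*x^2*a^5*b^3*A*B^5 + 12*x^2*a^5*b^3*A^2*B^4 + 14*x^2*a^5*b^3*A^3*B^3 + 6*x^2*a^5*b^3*A^4*B^2 + 2*x^2*a^6*b^2*B^6 + 8*x^2*a^6*b^2*A*B^5 + 10*x^2*a^6*b^2*A^2*B^4 + 4*x^2*a^6*b^2*A^3*B^3 + 4*x^2*a^6*b^2*A^4*B^2 + 2*x^2*a^7*b*B^6 + 2*x^2*a^7*b*A*B^5 + 4*x^2*a^7*b*A^2*B^4 + 2*x^2*a^8*B^6 + x^3*b^7*A^6 + 2*x^3*a*b^6*A^4*B^2 + x^3*a*b^6*A^5*B + 2*x^3*a^2*b^5*A^4*B^2 + 3*x^3*a^2*b^5*A^5*B + 2*x^3*a^3*b^4*A^2*B^4 + 4*x^3*a^3*b^4*A^3*B^3 + x^3*a^3*b^4*A^4*B^2 + x^3*a^4*b^3*A^2*B^4 + 4*x^3*a^4*b^3*A^3*B^3 + 2*x^3*a^4*b^3*A^4*B^2 + 3*x^3*a^5*b^2*A*B^5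 + 2*x^3*a^5*b^2*A^2*B^4 + x^3*a^6*b*A*B^5 + 2*x^3*a^6*b*A^2*B^4 + x^3*a^7*B^6 + x^4*b^6*A^6 + 2*x^4*a*b^5*A^4*B^2 + 4*x^4*a*b^5*A^5*B + 2*x^4*a^2*b^4*A^2*B^4 + 2*x^4*a^2*b^4*A^3*B^3 + 9*x^4*a^2*b^4*A^4*B^2 + 2*x^4*a^2*b^4*A^5*B + 2*x^4*a^3*b^3*A^2*B^4 + 16*x^4*a^3*b^3*A^3*B^3 + 2*x^4*a^3*b^3*A^4*B^2 + 2*x^4*a^4*b^2*A*B^5 + 9*x^4*a^4*b^2*A^2*B^4 + 2*x^4*a^4*b^2*A^3*B^3 + 2*x^4*a^4*b^2*A^4*B^2 + 4*x^4*a^5*b*A*B^5 + 2*x^4*a^5*b*A^2*B^4 + x^4*a^6*B^6)*h2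
        simp only [Polynomial.eval_add, Polynomial.eval_mul, Polynomial.eval_pow,
          Polynomial.eval_C, Polynomial.eval_X]
        linear_combination hquart
end

section
/- Let m ≥ 1, n = 2m+1, and let F(x) = x^{2^{m+1}+3} on F_{2^n}. Let a, b ∈ F_{2^n} with ab(a+b) ≠ 0 and set c = a/b (note c ∉ F_2, and then c^{2^{m+1}} ≠ c and c^{2^m} ≠ c, so all denominators below are nonzero). Put a_0 = (c^{2^m}+c^2)^2(c^{2^{m+1}}+c^2)/(c^{2^{m+2}}+c^2) + (c^{2^{m+1}}+c)(c^4+c)/(c^{2^{m+1}}+c^2), a_1 = c^2 + c, ω_1 = a_0/a_1^2, ω_2 = a_0 c^2/a_1^2, ω_3 = a_0 (c+1)^2/a_1^2, and assume a_0 ≠ 0. If Tr_1^n(ω_i) = 1 for some i ∈ {1,2,3}, then ∇_F(a,b) = 0. -/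
set_option maxHeartbeats 1600000 in
theorem stmt_10 (m n : ℕ) (hm : 1 ≤ m) (hn : n = 2 * m + 1)
    (F : Type) [Field F] [Fintype F] [DecidableEq F]
    (hcard : Fintype.card F = 2 ^ n)
    (a b : F) (hab : a * b * (a + b) ≠ 0)
    (c : F) (hc : c = a / b)
    (a₀ a₁ ω₁ ω₂ ω₃ : F)
    (ha₀ : a₀ = (c ^ 2 ^ m + c ^ 2) ^ 2 * (c ^ 2 ^ (m + 1) + c ^ 2) /
        (c ^ 2 ^ (m + 2) + c ^ 2) +
      (c ^ 2 ^ (m + 1) + c) * (c ^ 4 + c) / (c ^ 2 ^ (m + 1) + c ^ 2))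
    (ha₁ : a₁ = c ^ 2 + c)
    (hω₁ : ω₁ = a₀ / a₁ ^ 2) (hω₂ : ω₂ = a₀ * c ^ 2 / a₁ ^ 2)
    (hω₃ : ω₃ = a₀ * (c + 1) ^ 2 / a₁ ^ 2)
    (ha₀ne : a₀ ≠ 0)
    (htr : (∑ i ∈ Finset.range n, ω₁ ^ 2 ^ i = 1) ∨
           (∑ i ∈ Finset.range n, ω₂ ^ 2 ^ i = 1) ∨
           (∑ i ∈ Finset.range n, ω₃ ^ 2 ^ i = 1)) :
    (Finset.univ.filter (fun x : F =>
      (x + a + b) ^ (2 ^ (m + 1) + 3) + (x + b) ^ (2 ^ (m + 1) + 3) +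
        (x + a) ^ (2 ^ (m + 1) + 3) + x ^ (2 ^ (m + 1) + 3) = 0)).card = 0 := by
  subst hn
  haveI hp2 : CharP F 2 := by
    obtain ⟨p, hp⟩ := CharP.exists F
    haveI := hp
    have hprime : p.Prime := CharP.char_is_prime F p
    obtain ⟨k, -, hk⟩ := FiniteField.card F p
    have hpd : p ∣ 2 := by
      refine hprime.dvd_of_dvd_pow (n := 2 * m + 1) ?_
      rw [← hcard, hk]
      exact dvd_pow_self p (by positivity)
    have : p = 2 := ((Nat.prime_dvd_prime_iff_eq hprime Nat.prime_two).mp hpd)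
    rwa [this] at hp
  have htwo : (2 : F) = 0 := by
    have := CharP.cast_eq_zero F 2
    exact_mod_cast this
  have habne : a + b ≠ 0 := fun h => hab (by rw [h, mul_zero])
  have hab2 : a ≠ 0 ∧ b ≠ 0 := by
    constructor <;> intro h <;> apply hab <;> rw [h] <;> ring
  obtain ⟨ha, hb⟩ := hab2
  have hc0 : c ≠ 0 := by rw [hc]; exact div_ne_zero ha hb
  have hca : a = c * b := by rw [hc, div_mul_cancel₀ a hb]
  have hc1 : c + 1 ≠ 0 := by
    intro h
    apply habne
    have h2 : a + b = (c + 1) * b := by rw [hca]; ring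
    rw [h2, h, zero_mul]
  have hfrob : ∀ z : F, z ^ 2 ^ (2 * m + 1) = z := fun z => by
    rw [← hcard]; exact FiniteField.pow_card z
  have hsqinj : ∀ u v : F, u ^ 2 = v ^ 2 → u = v := by
    intro u v h
    have h2 : (u - v) ^ 2 = 0 := by linear_combination h + (v ^ 2 - u * v) * htwo
    have h3 := pow_eq_zero_iff (two_ne_zero) |>.mp h2
    exact sub_eq_zero.mp h3
  have hinj : ∀ (k : ℕ) (u v : F), u ^ 2 ^ k = v ^ 2 ^ k → u = v := by
    intro k
    induction k with
    | zero => intro u v h; simpa using h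
    | succ k ih =>
      intro u v h
      refine ih u v (hsqinj _ _ ?_)
      rw [pow_succ, pow_mul, pow_mul] at h
      exact h
  have hmul1 : (2 : ℕ) ^ m * 2 ^ (m + 1) = 2 ^ (2 * m + 1) := by
    rw [← pow_add]; congr 1; omega
  have hmul2 : (2 : ℕ) ^ (m + 1) * 2 ^ m = 2 ^ (2 * m + 1) := by
    rw [← pow_add]; congr 1; omega
  have hs3 : (c ^ 2) ^ 2 ^ m = c ^ 2 ^ (m + 1) := by
    rw [← pow_mul]; congr 1; rw [pow_succ]; ring
  have hdc2 : c ^ 2 ^ (m + 1) ≠ c ^ 2 := by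
    intro h
    have s5 : (c ^ 2 ^ (m + 1)) ^ 2 ^ m = c := by
      rw [← pow_mul, hmul2, hfrob]
    rw [h, hs3, h] at s5
    have hcc : c * (c - 1) = 0 := by linear_combination s5
    rcases mul_eq_zero.mp hcc with h' | h'
    · exact hc0 h'
    · apply hc1
      have : c = 1 := by linear_combination h'
      rw [this]; linear_combination htwo
  have hdc : c ^ 2 ^ (m + 1) ≠ c := by
    intro h
    have s1 : (c ^ 2 ^ m) ^ 2 ^ (m + 1) = c := by
      rw [← pow_mul, hmul1, hfrob]
    have s2 : c ^ 2 ^ m = c := hinj (m + 1) _ _ (by rw [s1, h])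
    have s4 : c ^ 2 = c := hinj m _ _ (by rw [hs3, h, s2])
    have hcc : c * (c - 1) = 0 := by linear_combination s4
    rcases mul_eq_zero.mp hcc with h' | h'
    · exact hc0 h'
    · apply hc1
      have : c = 1 := by linear_combination h'
      rw [this]; linear_combination htwo
  have hdcne : c ^ 2 ^ (m + 1) + c ≠ 0 := by
    intro h; exact hdc (by linear_combination h - c * htwo)
  have hdc2ne : c ^ 2 ^ (m + 1) + c ^ 2 ≠ 0 := by
    intro h; exact hdc2 (by linear_combination h - c ^ 2 * htwo)
  have ha1ne : c ^ 2 + c ≠ 0 := by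
    have h2 : c ^ 2 + c = c * (c + 1) := by ring
    rw [h2]; exact mul_ne_zero hc0 hc1
  have hden1 : (c ^ 2 ^ (m + 1)) ^ 2 + c ^ 2 ≠ 0 := by
    have h2 : (c ^ 2 ^ (m + 1)) ^ 2 + c ^ 2 = (c ^ 2 ^ (m + 1) + c) ^ 2 := by
      linear_combination -(c ^ 2 ^ (m + 1) * c) * htwo
    rw [h2]; exact pow_ne_zero 2 hdcne
  have hc42 : c ^ 2 ^ (m + 2) = (c ^ 2 ^ (m + 1)) ^ 2 := by
    rw [← pow_mul, pow_succ]
  have hs2 : (c ^ 2 ^ m) ^ 2 = c ^ 2 ^ (m + 1) := by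
    rw [← pow_mul, pow_succ]
  have hTadd : ∀ u v : F, (∑ i ∈ Finset.range (2 * m + 1), (u + v) ^ 2 ^ i) =
      (∑ i ∈ Finset.range (2 * m + 1), u ^ 2 ^ i)
        + ∑ i ∈ Finset.range (2 * m + 1), v ^ 2 ^ i := by
    intro u v
    rw [← Finset.sum_add_distrib]
    exact Finset.sum_congr rfl fun i _ => add_pow_char_pow u v 2 i
  have hTsq : ∀ u : F, (∑ i ∈ Finset.range (2 * m + 1), (u ^ 2) ^ 2 ^ i) =
      ∑ i ∈ Finset.range (2 * m + 1), u ^ 2 ^ i := by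
    intro u
    have h1 : (∑ i ∈ Finset.range (2 * m + 1), (u ^ 2) ^ 2 ^ i) =
        ∑ i ∈ Finset.range (2 * m + 1), u ^ 2 ^ (i + 1) :=
      Finset.sum_congr rfl fun i _ => by
        rw [← pow_mul]; congr 1; rw [pow_succ]; ring
    rw [h1]
    have h2 := Finset.sum_range_succ' (fun i => u ^ 2 ^ i) (2 * m + 1)
    have h3 := Finset.sum_range_succ (fun i => u ^ 2 ^ i) (2 * m + 1)
    simp only [pow_zero, pow_one] at h2
    rw [h3, hfrob u] at h2
    exact (add_right_cancel h2).symm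
  rw [Finset.card_eq_zero, Finset.filter_eq_empty_iff]
  intro x _
  intro hx
  set y : F := x / b with hy
  have hxy : x = y * b := (div_mul_cancel₀ x hb).symm
  have e1 : x + a + b = (y + c + 1) * b := by rw [hca, hxy]; ring
  have e2 : x + b = (y + 1) * b := by rw [hxy]; ring
  have e3 : x + a = (y + c) * b := by rw [hca, hxy]; ring
  rw [e1, e2, e3, hxy, mul_pow, mul_pow, mul_pow, mul_pow] at hx
  have hS : (y + c + 1) ^ (2 ^ (m + 1) + 3) + (y + 1) ^ (2 ^ (m + 1) + 3)
      + (y + c) ^ (2 ^ (m + 1) + 3) + y ^ (2 ^ (m + 1) + 3) = 0 := by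
    rcases mul_eq_zero.mp (show ((y + c + 1) ^ (2 ^ (m + 1) + 3) + (y + 1) ^ (2 ^ (m + 1) + 3)
      + (y + c) ^ (2 ^ (m + 1) + 3) + y ^ (2 ^ (m + 1) + 3)) * b ^ (2 ^ (m + 1) + 3) = 0
      from by linear_combination hx) with h | h
    · exact h
    · exact absurd h (pow_ne_zero _ hb)
  have hP1 : (y + c + 1) ^ (2 ^ (m + 1) + 3)
      = (y ^ 2 ^ (m + 1) + c ^ 2 ^ (m + 1) + 1) * (y + c + 1) ^ 3 := by
    rw [pow_add]
    congr 1
    rw [add_pow_char_pow, add_pow_char_pow, one_pow]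
  have hP2 : (y + 1) ^ (2 ^ (m + 1) + 3)
      = (y ^ 2 ^ (m + 1) + 1) * (y + 1) ^ 3 := by
    rw [pow_add]
    congr 1
    rw [add_pow_char_pow, one_pow]
  have hP3 : (y + c) ^ (2 ^ (m + 1) + 3)
      = (y ^ 2 ^ (m + 1) + c ^ 2 ^ (m + 1)) * (y + c) ^ 3 := by
    rw [pow_add]
    congr 1
    rw [add_pow_char_pow]
  have hP4 : y ^ (2 ^ (m + 1) + 3) = y ^ 2 ^ (m + 1) * y ^ 3 := by
    rw [pow_add]
  rw [hP1, hP2, hP3, hP4] at hS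
  have hE : c * (c + 1) * (y ^ 2 ^ (m + 1)) + (c ^ 2 ^ (m + 1) + c) * y ^ 2
      + (c ^ 2 ^ (m + 1) + c ^ 2) * y
      + (c ^ 2 ^ (m + 1) + c) * (c ^ 2 + c + 1) = 0 := by
    linear_combination hS + ((-1) + (-1) * c + (-1) * c * (c ^ 2 ^ (m + 1)) + (-1) * c ^ 2 + (-1) * c ^ 2 * (c ^ 2 ^ (m + 1)) + (-1) * c ^ 3 * (c ^ 2 ^ (m + 1)) + (-1) * (y ^ 2 ^ (m + 1)) + (-1) * (y ^ 2 ^ (m + 1)) * c + (-1) * (y ^ 2 ^ (m + 1)) * c ^ 2 + (-1) * (y ^ 2 ^ (m + 1)) * c ^ 3 + (-3) * y + (-1) * y * (c ^ 2 ^ (m + 1)) + (-3) * y * c + (-3) * y * c * (c ^ 2 ^ (m + 1)) + (-1) * y * c ^ 2 + (-3) * y * c ^ 2 * (c ^ 2 ^ (m + 1)) + (-3) * y * (y ^ 2 ^ (m + 1)) + (-3) * y * (y ^ 2 ^ (m + 1)) * c + (-3) * y * (y ^ 2 ^ (m + 1)) * c ^ 2 + (-3) * y ^ 2 + (-1) *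 y ^ 2 * (c ^ 2 ^ (m + 1)) + (-1) * y ^ 2 * c + (-3) * y ^ 2 * c * (c ^ 2 ^ (m + 1)) + (-3) * y ^ 2 * (y ^ 2 ^ (m + 1)) + (-3) * y ^ 2 * (y ^ 2 ^ (m + 1)) * c + (-1) * y ^ 3 + (-1) * y ^ 3 * (c ^ 2 ^ (m + 1)) + (-2) * y ^ 3 * (y ^ 2 ^ (m + 1)) : F) * htwo
  have hYe : c * (c + 1) * (y ^ 2 ^ (m + 1)) = ((c ^ 2 ^ (m + 1) + c) * y ^ 2 + (c ^ 2 ^ (m + 1) + c ^ 2) * y + (c ^ 2 ^ (m + 1) + c) * (c ^ 2 + c + 1)) := by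
    linear_combination hE + ((-1) * (c ^ 2 ^ (m + 1)) + (-1) * c + (-1) * c * (c ^ 2 ^ (m + 1)) + (-1) * c ^ 2 + (-1) * c ^ 2 * (c ^ 2 ^ (m + 1)) + (-1) * c ^ 3 + (-1) * y * (c ^ 2 ^ (m + 1)) + (-1) * y * c ^ 2 + (-1) * y ^ 2 * (c ^ 2 ^ (m + 1)) + (-1) * y ^ 2 * c : F) * htwo
  have hkey : ∀ z : F, (z ^ 2 ^ (m + 1)) ^ 2 ^ (m + 1) = z ^ 2 := by
    intro z
    rw [← pow_mul]
    have h2 : (2 : ℕ) ^ (m + 1) * 2 ^ (m + 1) = 2 ^ (2 * m + 1) * 2 := by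
      rw [← pow_add, ← pow_succ]; congr 1; omega
    rw [h2, pow_mul, hfrob z]
  have hswap : ∀ z : F, (z ^ 2) ^ 2 ^ (m + 1) = (z ^ 2 ^ (m + 1)) ^ 2 := fun z =>
    pow_right_comm z 2 (2 ^ (m + 1))
  have hE2 : c ^ 2 ^ (m + 1) * (c ^ 2 ^ (m + 1) + 1) * y ^ 2
      + (c ^ 2 + c ^ 2 ^ (m + 1)) * (y ^ 2 ^ (m + 1)) ^ 2
      + (c ^ 2 + (c ^ 2 ^ (m + 1)) ^ 2) * (y ^ 2 ^ (m + 1))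
      + (c ^ 2 + c ^ 2 ^ (m + 1)) * ((c ^ 2 ^ (m + 1)) ^ 2 + c ^ 2 ^ (m + 1) + 1) = 0 := by
    have h := congrArg (fun z : F => z ^ 2 ^ (m + 1)) hE
    simp only [add_pow_char_pow, mul_pow, one_pow] at h
    rw [zero_pow (pow_ne_zero (m + 1) (two_ne_zero))] at h
    simp only [hkey, hswap] at h
    linear_combination h
  set dd : F := c ^ 2 ^ (m + 1) with hdd
  set YY : F := y ^ 2 ^ (m + 1) with hYY
  have hA : a₀ * ((dd ^ 2 + c ^ 2) * (dd + c ^ 2)) =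
      (c ^ 2 ^ m + c ^ 2) ^ 2 * (dd + c ^ 2) * (dd + c ^ 2)
        + (dd ^ 2 + c ^ 2) * ((dd + c) * (c ^ 4 + c)) := by
    rw [ha₀, hc42]
    field_simp
  have hNa : a₀ * ((dd + c) ^ 2 * (dd + c ^ 2)) = ((dd + c ^ 4) * (dd + c ^ 2) ^ 2 + (dd + c) ^ 3 * (c * (c + 1)) * (c ^ 2 + c + 1)) := by
    linear_combination hA + (1 * dd ^ 2 + 2 * c ^ 2 * dd + 1 * c ^ 4 : F) * hs2 + (1 * c * dd ^ 2 * a₀ + (-1) * c ^ 2 * dd ^ 2 + 1 * c ^ 2 * dd ^ 2 * (c ^ 2 ^ m) + (-1) * c ^ 2 * dd ^ 3 + (-1) * c ^ 3 * dd + 1 * c ^ 3 * dd * a₀ + (-3) * c ^ 3 * dd ^ 2 + (-1) * c ^ 3 * dd ^ 3 + (-3) * c ^ 4 * dd + 2 * c ^ 4 * dd * (c ^ 2 ^ m) + (-3) * c ^ 4 * dd ^ 2 + (-1) * c ^ 5 + (-3) * c ^ 5 * dd + (-1) * c ^ 5 * dd ^ 2 + (-1) * c ^ 6 + 1 * c ^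 6 * (c ^ 2 ^ m) + (-1) * c ^ 6 * dd : F) * htwo
  have hQdNc : ((c ^ 2 + dd) * (c + dd) ^ 2) * y ^ 4 + (c ^ 2 * (c + 1) ^ 2 * (dd * (dd + 1)) + (c ^ 2 + dd) ^ 3 + c * (c + 1) * (c + dd) ^ 3) * y ^ 2 + ((c + dd) ^ 2 * (c * (c + 1) * (dd + c ^ 2))) * y = a₀ * ((dd + c) ^ 2 * (dd + c ^ 2)) := by
    linear_combination (c * (c + 1)) ^ 2 * hE2 + ((-1) * dd ^ 2 + (-1) * c * dd + (-2) * c * dd ^ 2 + (-2) * c ^ 2 * dd + (-2) * c ^ 2 * dd ^ 2 + (-2) * c ^ 3 + (-2) * c ^ 3 * dd + (-2) * c ^ 4 + (-1) * c ^ 4 * dd + (-1) * c ^ 5 + (-1) * YY * c * dd + (-1) * YY * c ^ 2 * dd + (-1) * YY * c ^ 3 + (-1) * YY * c ^ 4 + (-1) * y * dd ^ 2 + (-2) * y * c ^ 2 * dd + (-1) * y * c ^ 4 + (-1) * y ^ 2 * dd ^ 2 + (-1) * y ^ 2 * c * dd + (-1) * y ^ 2 * c ^ 2 * dd + (-1)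 * y ^ 2 * c ^ 3 : F) * hYe - hNa + ((-1) * dd ^ 3 + (-1) * c * dd ^ 2 + (-2) * c * dd ^ 3 + (-1) * c ^ 2 * dd + (-6) * c ^ 2 * dd ^ 2 + (-4) * c ^ 2 * dd ^ 3 + (-5) * c ^ 3 * dd + (-9) * c ^ 3 * dd ^ 2 + (-4) * c ^ 3 * dd ^ 3 + (-2) * c ^ 4 + (-9) * c ^ 4 * dd + (-9) * c ^ 4 * dd ^ 2 + (-2) * c ^ 4 * dd ^ 3 + (-4) * c ^ 5 + (-9) * c ^ 5 * dd + (-5) * c ^ 5 * dd ^ 2 + (-4) * c ^ 6 + (-6) * c ^ 6 * dd + (-1) * c ^ 6 * dd ^ 2 + (-2) * c ^ 7 + (-1) * c ^ 7 * dd + (-1) * c ^ 8 + (-1) * y * dd ^ 3 + (-1) * y * c * dd ^ 2 + (-1) * y * c * dd ^ 3 + (-2) * y * c ^ 2 * dd ^ 2 + (-1) * y * c ^ 2 * dd ^ 3 + (-2) * y * c ^ 3 * dd + (-2) * y * c ^ 3 * dd ^ 2 + (-2) * y * c ^ 4 * dd + (-2) * y * c ^ 4 * dd ^ 2 + (-1)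 * y * c ^ 5 + (-2) * y * c ^ 5 * dd + (-1) * y * c ^ 6 + (-1) * y * c ^ 6 * dd + (-1) * y * c ^ 7 + (-1) * y ^ 2 * dd ^ 3 + (-2) * y ^ 2 * c * dd ^ 2 + (-1) * y ^ 2 * c * dd ^ 3 + (-1) * y ^ 2 * c ^ 2 * dd + (-2) * y ^ 2 * c ^ 2 * dd ^ 2 + (-1) * y ^ 2 * c ^ 2 * dd ^ 3 + (-2) * y ^ 2 * c ^ 3 * dd + (-2) * y ^ 2 * c ^ 3 * dd ^ 2 + (-1) * y ^ 2 * c ^ 4 + (-2) * y ^ 2 * c ^ 4 * dd + (-1) * y ^ 2 * c ^ 4 * dd ^ 2 + (-1) * y ^ 2 * c ^ 5 + (-2) * y ^ 2 * c ^ 5 * dd + (-1) * y ^ 2 * c ^ 6 + (-1) * y ^ 3 * dd ^ 3 + (-1) * y ^ 3 * c * dd ^ 2 + (-2) * y ^ 3 * c ^ 2 * dd ^ 2 + (-2) * y ^ 3 * c ^ 3 * dd + (-1) * y ^ 3 * c ^ 4 * dd + (-1) * y ^ 3 * c ^ 5 : F) * htwo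
  obtain ⟨al, hal⟩ : ∃ t : F, t = ((c ^ 2 + dd) * (c + dd) ^ 2) := ⟨_, rfl⟩
  obtain ⟨be, hbe⟩ : ∃ t : F, t = (c ^ 2 * (c + 1) ^ 2 * (dd * (dd + 1)) + (c ^ 2 + dd) ^ 3 + c * (c + 1) * (c + dd) ^ 3) := ⟨_, rfl⟩
  obtain ⟨ga, hga⟩ : ∃ t : F, t = ((c + dd) ^ 2 * (c * (c + 1) * (dd + c ^ 2))) := ⟨_, rfl⟩
  obtain ⟨D0, hD0⟩ : ∃ t : F, t = ((dd + c) ^ 2 * (dd + c ^ 2)) := ⟨_, rfl⟩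
  obtain ⟨K, hKdef⟩ : ∃ t : F, t = (c ^ 2 + c) ^ 2 * D0 := ⟨_, rfl⟩
  obtain ⟨V, hV⟩ : ∃ t : F, t = ((c ^ 2 + dd) ^ 2 * (c + dd) ^ 4 * (c ^ 2 + c) ^ 3) := ⟨_, rfl⟩
  have hQdN : al * y ^ 4 + be * y ^ 2 + ga * y = a₀ * D0 := by
    rw [hal, hbe, hga, hD0]; exact hQdNc
  have hKne : K ≠ 0 := by
    rw [hKdef, hD0]
    exact mul_ne_zero (pow_ne_zero 2 ha1ne)
      (mul_ne_zero (pow_ne_zero 2 hdcne) hdc2ne)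
  have hZ : al * K ^ 3 = V ^ 2 := by
    rw [hal, hKdef, hD0, hV]; ring
  have hXY1 : ga ^ 2 * 1 ^ 4 + be * 1 ^ 2 * K = V * 1 := by
    rw [hbe, hga, hKdef, hD0, hV]
    linear_combination (1 * c ^ 2 * dd ^ 6 + 3 * c ^ 3 * dd ^ 5 + 2 * c ^ 3 * dd ^ 6 + 4 * c ^ 4 * dd ^ 4 + 10 * c ^ 4 * dd ^ 5 + 1 * c ^ 4 * dd ^ 6 + 3 * c ^ 5 * dd ^ 3 + 20 * c ^ 5 * dd ^ 4 + 12 * c ^ 5 * dd ^ 5 + 1 * c ^ 6 * dd ^ 2 + 20 * c ^ 6 * dd ^ 3 + 35 * c ^ 6 * dd ^ 4 + 6 * c ^ 6 * dd ^ 5 + 10 * c ^ 7 * dd ^ 2 + 45 * c ^ 7 * dd ^ 3 + 26 * c ^ 7 * dd ^ 4 + 1 * c ^ 7 * dd ^ 5 + 2 * c ^ 8 * dd + 29 * c ^ 8 * dd ^ 2 + 44 * c ^ 8 * dd ^ 3 + 7 * c ^ 8 * dd ^ 4 + 9 * c ^ 9 * dd + 36 * c ^ 9 * dd ^ 2 +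 17 * c ^ 9 * dd ^ 3 + 1 * c ^ 10 + 14 * c ^ 10 * dd + 18 * c ^ 10 * dd ^ 2 + 2 * c ^ 11 + 8 * c ^ 11 * dd + (-1) * c ^ 11 * dd ^ 3 + 1 * c ^ 12 + (-2) * c ^ 12 * dd ^ 2 + (-1) * c ^ 13 * dd : F) * htwo
  have hXY2 : ga ^ 2 * c ^ 4 + be * c ^ 2 * K = V * c := by
    rw [hbe, hga, hKdef, hD0, hV]
    linear_combination ((-1) * c ^ 5 * dd ^ 5 + (-2) * c ^ 6 * dd ^ 4 + 1 * c ^ 6 * dd ^ 6 + (-1) * c ^ 7 * dd ^ 3 + 8 * c ^ 7 * dd ^ 5 + 2 * c ^ 7 * dd ^ 6 + 18 * c ^ 8 * dd ^ 4 + 14 * c ^ 8 * dd ^ 5 + 1 * c ^ 8 * dd ^ 6 + 17 * c ^ 9 * dd ^ 3 + 36 * c ^ 9 * dd ^ 4 + 9 * c ^ 9 * dd ^ 5 + 7 * c ^ 10 * dd ^ 2 + 44 * c ^ 10 * dd ^ 3 + 29 * c ^ 10 * dd ^ 4 + 2 * c ^ 10 * dd ^ 5 + 1 * c ^ 11 *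 dd + 26 * c ^ 11 * dd ^ 2 + 45 * c ^ 11 * dd ^ 3 + 10 * c ^ 11 * dd ^ 4 + 6 * c ^ 12 * dd + 35 * c ^ 12 * dd ^ 2 + 20 * c ^ 12 * dd ^ 3 + 1 * c ^ 12 * dd ^ 4 + 12 * c ^ 13 * dd + 20 * c ^ 13 * dd ^ 2 + 3 * c ^ 13 * dd ^ 3 + 1 * c ^ 14 + 10 * c ^ 14 * dd + 4 * c ^ 14 * dd ^ 2 + 2 * c ^ 15 + 3 * c ^ 15 * dd + 1 * c ^ 16 : F) * htwo
  have hXY3 : ga ^ 2 * (c + 1) ^ 4 + be * (c + 1) ^ 2 * K = V * (c + 1) := by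
    rw [hbe, hga, hKdef, hD0, hV]
    linear_combination (1 * c ^ 2 * dd ^ 6 + 3 * c ^ 3 * dd ^ 5 + 5 * c ^ 3 * dd ^ 6 + 4 * c ^ 4 * dd ^ 4 + 20 * c ^ 4 * dd ^ 5 + 11 * c ^ 4 * dd ^ 6 + 3 * c ^ 5 * dd ^ 3 + 34 * c ^ 5 * dd ^ 4 + 57 * c ^ 5 * dd ^ 5 + 14 * c ^ 5 * dd ^ 6 + 1 * c ^ 6 * dd ^ 2 + 30 * c ^ 6 * dd ^ 3 + 117 * c ^ 6 * dd ^ 4 + 90 * c ^ 6 * dd ^ 5 + 11 * c ^ 6 * dd ^ 6 + 13 * c ^ 7 * dd ^ 2 + 120 * c ^ 7 * dd ^ 3 + 217 * c ^ 7 * dd ^ 4 + 85 * c ^ 7 * dd ^ 5 + 5 * c ^ 7 * dd ^ 6 + 2 * c ^ 8 * dd + 63 * c ^ 8 * dd ^ 2 + 258 * c ^ 8 * dd ^ 3 + 239 * c ^ 8 * dd ^ 4 + 48 * c ^ 8 * dd ^ 5 + 1 * c ^ 8 * dd ^ 6 + 15 * c ^ 9 * dd + 160 * c ^ 9 * dd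 ^ 2 + 330 * c ^ 9 * dd ^ 3 + 160 * c ^ 9 * dd ^ 4 + 15 * c ^ 9 * dd ^ 5 + 1 * c ^ 10 + 48 * c ^ 10 * dd + 239 * c ^ 10 * dd ^ 2 + 258 * c ^ 10 * dd ^ 3 + 63 * c ^ 10 * dd ^ 4 + 2 * c ^ 10 * dd ^ 5 + 5 * c ^ 11 + 85 * c ^ 11 * dd + 217 * c ^ 11 * dd ^ 2 + 120 * c ^ 11 * dd ^ 3 + 13 * c ^ 11 * dd ^ 4 + 11 * c ^ 12 + 90 * c ^ 12 * dd + 117 * c ^ 12 * dd ^ 2 + 30 * c ^ 12 * dd ^ 3 + 1 * c ^ 12 * dd ^ 4 + 14 * c ^ 13 + 57 * c ^ 13 * dd + 34 * c ^ 13 * dd ^ 2 + 3 * c ^ 13 * dd ^ 3 + 11 * c ^ 14 + 20 * c ^ 14 * dd + 4 * c ^ 14 * dd ^ 2 + 5 * c ^ 15 + 3 * c ^ 15 * dd + 1 * c ^ 16 : F) * htwo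
  have key : ∀ g w : F,
      ga ^ 2 * g ^ 4 + be * g ^ 2 * K = V * g →
      w * (c ^ 2 + c) ^ 2 = a₀ * g ^ 2 →
      (∑ i ∈ Finset.range (2 * m + 1), w ^ 2 ^ i) = 0 := by
    intro g w hXY hw
    have hrK : g ^ 2 / K * K = g ^ 2 := div_mul_cancel₀ _ hKne
    have h5 : w * K = (g ^ 2 / K * al * y ^ 4 + g ^ 2 / K * be * y ^ 2
        + g ^ 2 / K * ga * y) * K := by
      linear_combination w * hKdef + D0 * hw - g ^ 2 * hQdN
        - (al * y ^ 4 + be * y ^ 2 + ga * y) * hrK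
    have hsplit : w = g ^ 2 / K * al * y ^ 4 + g ^ 2 / K * be * y ^ 2
        + g ^ 2 / K * ga * y := mul_right_cancel₀ hKne h5
    have h6 : (g ^ 2 / K * al * y ^ 4 + (g ^ 2 / K * be * y ^ 2) ^ 2
        + ((g ^ 2 / K * ga * y) ^ 2) ^ 2) * K ^ 4 = 0 * K ^ 4 := by
      linear_combination (al * y ^ 4 * K ^ 3
          + be ^ 2 * y ^ 4 * K ^ 2 * (g ^ 2 / K * K + g ^ 2)
          + ga ^ 4 * y ^ 4 * ((g ^ 2 / K * K) ^ 3 + (g ^ 2 / K * K) ^ 2 * g ^ 2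
              + (g ^ 2 / K * K) * g ^ 4 + g ^ 6)) * hrK
        + y ^ 4 * g ^ 2 * hZ
        + y ^ 4 * (ga ^ 2 * g ^ 4 + be * g ^ 2 * K + V * g) * hXY
        + (1 * y ^ 4 * g ^ 2 * V ^ 2 + (-1) * y ^ 4 * g ^ 6 * K * be * ga ^ 2 : F) * htwo
    have h7 : g ^ 2 / K * al * y ^ 4 + (g ^ 2 / K * be * y ^ 2) ^ 2
        + ((g ^ 2 / K * ga * y) ^ 2) ^ 2 = 0 := mul_right_cancel₀ (pow_ne_zero 4 hKne) h6
    rw [hsplit, hTadd, hTadd, ← hTsq (g ^ 2 / K * be * y ^ 2),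
      ← hTsq (g ^ 2 / K * ga * y), ← hTsq ((g ^ 2 / K * ga * y) ^ 2),
      ← hTadd, ← hTadd, h7]
    exact Finset.sum_eq_zero fun i _ => zero_pow (pow_ne_zero i two_ne_zero)
  rcases htr with h | h | h
  · have h0 := key 1 ω₁ hXY1 (by
      rw [hω₁, ha₁, one_pow, mul_one]
      exact div_mul_cancel₀ a₀ (pow_ne_zero 2 ha1ne))
    rw [h0] at h
    exact zero_ne_one h
  · have h0 := key c ω₂ hXY2 (by
      rw [hω₂, ha₁]
      exact div_mul_cancel₀ (a₀ * c ^ 2) (pow_ne_zero 2 ha1ne))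
    rw [h0] at h
    exact zero_ne_one h
  · have h0 := key (c + 1) ω₃ hXY3 (by
      rw [hω₃, ha₁]
      exact div_mul_cancel₀ (a₀ * (c + 1) ^ 2) (pow_ne_zero 2 ha1ne))
    rw [h0] at h
    exact zero_ne_one h
end

section
/- Let p be an odd prime with p ≠ 5, n a positive integer, and let F(x) = x^5 on F_{p^n}. For all a, b ∈ F_{p^n} with ab ≠ 0, if η(−(a^2+b^2)) = −1 (i.e. −(a^2+b^2) is a nonsquare in F_{p^n}), then ∇_F(a,b) = 1. -/
theorem stmt_12 (p n : ℕ) (hp : p.Prime) (hodd : p ≠ 2) (hp5 : p ≠ 5) (hn : 0 < n)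
    (F : Type) [Field F] [Fintype F] [DecidableEq F]
    (hcard : Fintype.card F = p ^ n)
    (a b : F) (hab : a * b ≠ 0)
    (hns : ¬ IsSquare (-(a ^ 2 + b ^ 2))) :
    (Finset.univ.filter (fun x : F =>
      (x + a + b) ^ 5 - (x + b) ^ 5 - (x + a) ^ 5 + x ^ 5 = 0)).card = 1 := by
  have hchar : CharP F p := by
    have h0 : (Fintype.card F : F) = 0 := Nat.cast_card_eq_zero F
    rw [hcard] at h0
    have hdvd : ringChar F ∣ p ^ n := ringChar.dvd (by exact_mod_cast h0)
    have hprime : (ringChar F).Prime := CharP.char_is_prime F (ringChar F)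
    have : ringChar F = p := by
      rcases (Nat.dvd_prime_pow hp).mp hdvd with ⟨k, hk, hke⟩
      rcases Nat.lt_or_ge 0 k with hk0 | hk0
      · exact ((Nat.prime_dvd_prime_iff_eq hp hprime).mp (hke ▸ dvd_pow_self p hk0.ne')).symm
      · interval_cases k; simp only [pow_zero] at hke; exact absurd hke hprime.ne_one
    exact this ▸ ringChar.charP F
  have h2 : (2 : F) ≠ 0 := by
    intro h
    have := (CharP.cast_eq_zero_iff F p 2).mp (by exact_mod_cast h)
    exact hodd ((Nat.prime_dvd_prime_iff_eq hp Nat.prime_two).mp this)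
  have h5 : (5 : F) ≠ 0 := by
    intro h
    have := (CharP.cast_eq_zero_iff F p 5).mp (by exact_mod_cast h)
    exact hp5 ((Nat.prime_dvd_prime_iff_eq hp (by norm_num)).mp this)
  have hset : (Finset.univ.filter (fun x : F =>
      (x + a + b) ^ 5 - (x + b) ^ 5 - (x + a) ^ 5 + x ^ 5 = 0)) = {-(a + b) / 2} := by
    ext x
    simp only [Finset.mem_filter, Finset.mem_univ, true_and, Finset.mem_singleton]
    constructor
    · intro hx
      have hfac : 5 * (a * b) * (2 * x + a + b) *
          (2 * x ^ 2 + 2 * (a + b) * x + (a ^ 2 + a * b + b ^ 2)) = 0 := by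
        linear_combination hx
      rcases mul_eq_zero.mp hfac with h1 | hq
      · rcases mul_eq_zero.mp h1 with h1 | hl
        · rcases mul_eq_zero.mp h1 with h1 | h1
          · exact absurd h1 h5
          · exact absurd h1 hab
        · field_simp
          linear_combination hl
      · exfalso
        apply hns
        refine ⟨2 * x + a + b, ?_⟩
        linear_combination -2 * hq
    · intro hx
      subst hx
      field_simp
      ring
  rw [hset, Finset.card_singleton]
end

section
/- Let p be an odd prime with p ≠ 5, n a positive integer, and let F(x) = x^5 on F_{p^n}. For all a, b ∈ F_{p^n} with ab ≠ 0, if η(−(a^2+b^2)) = 1 (i.e. −(a^2+b^2) is a nonzero square in F_{p^n}), then ∇_F(a,b) = 3. -/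
theorem stmt_13 (p n : ℕ) (hp : p.Prime) (hodd : p ≠ 2) (hp5 : p ≠ 5) (hn : 0 < n)
    (F : Type) [Field F] [Fintype F] [DecidableEq F]
    (hcard : Fintype.card F = p ^ n)
    (a b : F) (hab : a * b ≠ 0)
    (hsq : IsSquare (-(a ^ 2 + b ^ 2))) (hne : -(a ^ 2 + b ^ 2) ≠ 0) :
    (Finset.univ.filter (fun x : F =>
      (x + a + b) ^ 5 - (x + b) ^ 5 - (x + a) ^ 5 + x ^ 5 = 0)).card = 3 := by
  -- characteristic facts
  obtain ⟨m, hq, hcard'⟩ := FiniteField.card F (ringChar F)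
  have hqp : ringChar F = p := by
    have h : ringChar F ∣ p ^ n := by
      rw [← hcard, hcard']; exact dvd_pow_self _ (by positivity)
    exact (Nat.prime_dvd_prime_iff_eq hq hp).mp (hq.dvd_of_dvd_pow h)
  haveI : CharP F p := hqp ▸ ringChar.charP F
  have h2 : (2 : F) ≠ 0 := by
    intro h
    have := (CharP.cast_eq_zero_iff F p 2).mp (by exact_mod_cast h)
    exact hodd ((Nat.prime_dvd_prime_iff_eq hp Nat.prime_two).mp this)
  have h5 : (5 : F) ≠ 0 := by
    intro h
    have := (CharP.cast_eq_zero_iff F p 5).mp (by exact_mod_cast h)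
    exact hp5 ((Nat.prime_dvd_prime_iff_eq hp (by norm_num)).mp this)
  obtain ⟨t, ht⟩ := hsq
  have ht0 : t ≠ 0 := by rintro rfl; exact hne (ht.trans (mul_zero 0))
  set x0 : F := -(a + b) / 2 with hx0
  set x1 : F := (-(a + b) + t) / 2 with hx1
  set x2 : F := (-(a + b) - t) / 2 with hx2
  have key : ∀ x : F, (x + a + b) ^ 5 - (x + b) ^ 5 - (x + a) ^ 5 + x ^ 5
      = 20 * a * b * (x - x0) * (x - x1) * (x - x2) := by
    intro x
    rw [hx0, hx1, hx2]
    field_simp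
    linear_combination (-(20 * a * b * (2 * x + (a + b)))) * ht
  have hset : (Finset.univ.filter (fun x : F =>
      (x + a + b) ^ 5 - (x + b) ^ 5 - (x + a) ^ 5 + x ^ 5 = 0)) = {x0, x1, x2} := by
    ext x
    simp only [Finset.mem_filter, Finset.mem_univ, true_and, Finset.mem_insert,
      Finset.mem_singleton, key]
    have h20 : (20 : F) * a * b ≠ 0 := by
      have : (20 : F) = 2 * 2 * 5 := by norm_num
      rw [mul_assoc, this]
      exact mul_ne_zero (by simp [h2, h5]) hab
    constructor
    · intro h
      rcases mul_eq_zero.mp h with h | h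
      · rcases mul_eq_zero.mp h with h | h
        · rcases mul_eq_zero.mp h with h | h
          · exact absurd h h20
          · exact Or.inl (sub_eq_zero.mp h)
        · exact Or.inr (Or.inl (sub_eq_zero.mp h))
      · exact Or.inr (Or.inr (sub_eq_zero.mp h))
    · rintro (rfl | rfl | rfl) <;> ring
  rw [hset]
  have h01 : x0 ≠ x1 := by
    intro h; apply ht0
    have hd : t = 2 * x1 - 2 * x0 := by rw [hx0, hx1]; field_simp; try ring
    rw [hd, h]; ring
  have h02 : x0 ≠ x2 := by
    intro h; apply ht0
    have hd : t = 2 * x0 - 2 * x2 := by rw [hx0, hx2]; field_simp; try ring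
    rw [hd, h]; ring
  have h12 : x1 ≠ x2 := by
    intro h; apply ht0
    have hd : t = x1 - x2 := by rw [hx1, hx2]; field_simp; try ring
    rw [hd, h]; ring
  rw [Finset.card_insert_of_notMem (by simp [h01, h02]),
    Finset.card_insert_of_notMem (by simp [h12]), Finset.card_singleton]
end

section
/- Let p be an odd prime with p ≠ 5 and n a positive integer. Then F(x) = x^5 on F_{p^n} is second-order zero differential 3-uniform, i.e. max{∇_F(a,b) : a, b ∈ F_{p^n}\{0}} = 3. -/
lemma aux_charP (p n : ℕ) (hp : p.Prime) (hn : 0 < n)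
    (F : Type) [Field F] [Fintype F] (hcard : Fintype.card F = p ^ n) : CharP F p := by
  obtain ⟨q, hq⟩ := CharP.exists F
  haveI := hq
  have hqp : q.Prime := CharP.char_is_prime F q
  obtain ⟨m, hm⟩ := FiniteField.card F q
  have h1 : q ∣ p ^ n := by
    rw [← hcard, hm.2]
    exact dvd_pow_self q m.pos.ne'
  have : q = p := (Nat.prime_dvd_prime_iff_eq hqp hp).mp (hqp.dvd_of_dvd_pow h1)
  exact this ▸ hq

lemma aux_exists (p n : ℕ) (hp : p.Prime) (hodd : p ≠ 2) (hp5 : p ≠ 5) (hn : 0 < n)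
    (F : Type) [Field F] [Fintype F] [DecidableEq F] (hcard : Fintype.card F = p ^ n) :
    ∃ a b c : F, a ≠ 0 ∧ b ≠ 0 ∧ c ≠ 0 ∧ a ^ 2 + b ^ 2 + c ^ 2 = 0 := by
  haveI := aux_charP p n hp hn F hcard
  haveI : Fact p.Prime := ⟨hp⟩
  have h2 : (2 : F) ≠ 0 := by
    intro h
    have hd : p ∣ 2 := (CharP.cast_eq_zero_iff F p 2).mp (by exact_mod_cast h)
    exact hodd ((Nat.prime_dvd_prime_iff_eq hp Nat.prime_two).mp hd)
  obtain ⟨u, v, huv⟩ : ∃ u v : F, u ^ 2 + v ^ 2 = -1 := by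
    obtain ⟨u, v, huv⟩ := ZMod.sq_add_sq p (-1 : ZMod p)
    refine ⟨ZMod.castHom (dvd_refl p) F u, ZMod.castHom (dvd_refl p) F v, ?_⟩
    have := congrArg (ZMod.castHom (dvd_refl p) F) huv
    rw [map_add, map_pow, map_pow, map_neg, map_one] at this
    exact this
  by_cases hsq : IsSquare (-1 : F)
  · have hmod : Fintype.card F % 4 ≠ 3 := (FiniteField.isSquare_neg_one_iff).mp hsq
    obtain ⟨i, hi⟩ := hsq
    have hi2 : i ^ 2 = -1 := by rw [sq]; exact hi.symm
    have hcard5 : 5 < Fintype.card F := by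
      have hoddc : Fintype.card F % 2 = 1 := by
        rw [hcard]
        exact Nat.odd_iff.mp ((hp.odd_of_ne_two hodd).pow)
      have hne5 : Fintype.card F ≠ 5 := by
        rw [hcard]
        intro h
        have hd : p ∣ 5 := by rw [← h]; exact dvd_pow_self p hn.ne'
        exact hp5 ((Nat.prime_dvd_prime_iff_eq hp (by norm_num)).mp hd)
      have h3p : 3 ≤ p := by have := hp.two_le; omega
      have hge3 : 3 ≤ Fintype.card F := by
        rw [hcard]
        exact le_trans h3p (Nat.le_self_pow hn.ne' p)
      omega
    obtain ⟨t, ht⟩ : ∃ t : F, t ∉ ({0, 1, -1, i, -i} : Finset F) := by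
      have hle : ({0, 1, -1, i, -i} : Finset F).card ≤ 5 := by
        apply le_trans (Finset.card_insert_le _ _)
        apply Nat.succ_le_succ
        apply le_trans (Finset.card_insert_le _ _)
        apply Nat.succ_le_succ
        apply le_trans (Finset.card_insert_le _ _)
        apply Nat.succ_le_succ
        apply le_trans (Finset.card_insert_le _ _)
        apply Nat.succ_le_succ
        simp
      by_contra hcon
      push_neg at hcon
      have hsub : (Finset.univ : Finset F) ⊆ {0, 1, -1, i, -i} := fun x _ => hcon x
      have := Finset.card_le_card hsub
      rw [Finset.card_univ] at this
      omega
    simp only [Finset.mem_insert, Finset.mem_singleton, not_or] at ht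
    obtain ⟨ht0, ht1, htm1, hti, htmi⟩ := ht
    have hts1 : t ^ 2 ≠ 1 := by
      intro h
      have hz : (t - 1) * (t + 1) = 0 := by linear_combination h
      rcases mul_eq_zero.mp hz with h' | h'
      · exact ht1 (by linear_combination h')
      · exact htm1 (by linear_combination h')
    have htsm1 : t ^ 2 ≠ -1 := by
      intro h
      have hz : (t - i) * (t + i) = 0 := by linear_combination h - hi2
      rcases mul_eq_zero.mp hz with h' | h'
      · exact hti (by linear_combination h')
      · exact htmi (by linear_combination h')
    refine ⟨1 - t ^ 2, 2 * t, i * (1 + t ^ 2), ?_, ?_, ?_, ?_⟩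
    · exact sub_ne_zero.mpr (Ne.symm hts1)
    · exact mul_ne_zero h2 ht0
    · refine mul_ne_zero (fun h => ?_) (fun h => htsm1 (by linear_combination h))
      rw [h] at hi2
      simp at hi2
    · linear_combination (1 + t ^ 2) ^ 2 * hi2
  · have hu : u ≠ 0 := by
      rintro rfl
      exact hsq ⟨-v, by linear_combination -huv⟩
    have hv : v ≠ 0 := by
      rintro rfl
      exact hsq ⟨-u, by linear_combination -huv⟩
    exact ⟨u, v, 1, hu, hv, one_ne_zero, by linear_combination huv⟩

lemma aux_le_three (F : Type) [Field F] [Fintype F] [DecidableEq F]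
    (a b : F) (h2 : (2:F) ≠ 0) (h5ab : 5*a*b ≠ 0) :
    (Finset.univ.filter (fun x : F =>
        (x + a + b) ^ 5 - (x + b) ^ 5 - (x + a) ^ 5 + x ^ 5 = 0)).card ≤ 3 := by
  set Q : Polynomial F := Polynomial.X ^ 3 + Polynomial.C (a^2+b^2) * Polynomial.X with hQ
  have hQd : Q.natDegree = 3 := by rw [hQ]; compute_degree!
  have hQ0 : Q ≠ 0 := fun h => by simp [h] at hQd
  have key : ∀ x : F, 2*((x+a+b)^5-(x+b)^5-(x+a)^5+x^5)
      = 5*a*b*((2*x+a+b)^3+(a^2+b^2)*(2*x+a+b)) := by intro x; ring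
  calc (Finset.univ.filter (fun x : F =>
        (x + a + b) ^ 5 - (x + b) ^ 5 - (x + a) ^ 5 + x ^ 5 = 0)).card
      ≤ Q.roots.toFinset.card := by
        apply Finset.card_le_card_of_injOn (fun x => 2*x+a+b)
        · intro x hx
          simp only [Finset.mem_coe, Finset.mem_filter, Finset.mem_univ, true_and] at hx
          rw [Finset.mem_coe, Multiset.mem_toFinset, Polynomial.mem_roots hQ0]
          have hX : 5*a*b*((2*x+a+b)^3+(a^2+b^2)*(2*x+a+b)) = 0 := by
            rw [← key x, hx, mul_zero]
          have hE : (2*x+a+b)^3+(a^2+b^2)*(2*x+a+b) = 0 :=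
            (mul_eq_zero.mp hX).resolve_left h5ab
          simpa [hQ, Polynomial.IsRoot] using hE
        · intro x _ y _ hxy
          simp only at hxy
          have : (2:F)*x = 2*y := by linear_combination hxy
          exact mul_left_cancel₀ h2 this
    _ ≤ Multiset.card Q.roots := Multiset.toFinset_card_le _
    _ ≤ Q.natDegree := Polynomial.card_roots' Q
    _ = 3 := hQd

lemma aux_eq_three (F : Type) [Field F] [Fintype F] [DecidableEq F]
    (a b c : F) (h2 : (2:F) ≠ 0) (h5 : (5:F) ≠ 0) (ha : a ≠ 0) (hb : b ≠ 0) (hc : c ≠ 0)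
    (habc : a^2 + b^2 + c^2 = 0) :
    (Finset.univ.filter (fun x : F =>
        (x + a + b) ^ 5 - (x + b) ^ 5 - (x + a) ^ 5 + x ^ 5 = 0)).card = 3 := by
  have h5ab : (5:F)*a*b ≠ 0 := mul_ne_zero (mul_ne_zero h5 ha) hb
  have key : ∀ x : F, 2*((x+a+b)^5-(x+b)^5-(x+a)^5+x^5)
      = 5*a*b*((2*x+a+b)^3+(a^2+b^2)*(2*x+a+b)) := by intro x; ring
  have hlin : ∀ d x : F, 2*x+a+b = d ↔ x = (d-a-b)/2 := by
    intro d x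
    constructor
    · intro h; field_simp; linear_combination h
    · intro h; subst h; field_simp; ring
  have hmem : ∀ x : F, ((x+a+b)^5-(x+b)^5-(x+a)^5+x^5 = 0)
      ↔ (2*x+a+b = 0 ∨ 2*x+a+b = c ∨ 2*x+a+b = -c) := by
    intro x
    constructor
    · intro h
      have hX : 5*a*b*((2*x+a+b)*((2*x+a+b-c)*(2*x+a+b+c))) = 0 := by
        linear_combination 2*h - 5*a*b*(2*x+a+b)*habc
      have hE := (mul_eq_zero.mp hX).resolve_left h5ab
      rcases mul_eq_zero.mp hE with h' | h'
      · exact Or.inl h'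
      · rcases mul_eq_zero.mp h' with h'' | h''
        · exact Or.inr (Or.inl (by linear_combination h''))
        · exact Or.inr (Or.inr (by linear_combination h''))
    · intro h
      apply mul_left_cancel₀ h2
      rw [mul_zero]
      rcases h with h | h | h
      · linear_combination key x + 5*a*b*((2*x+a+b)^2+a^2+b^2)*h
      · linear_combination key x + 5*a*b*((2*x+a+b)^2+(2*x+a+b)*c+c^2+a^2+b^2)*h
          + 5*a*b*c*habc
      · linear_combination key x + 5*a*b*((2*x+a+b)^2-(2*x+a+b)*c+c^2+a^2+b^2)*h
          - 5*a*b*c*habc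
  have hset : (Finset.univ.filter (fun x : F =>
        (x + a + b) ^ 5 - (x + b) ^ 5 - (x + a) ^ 5 + x ^ 5 = 0))
      = ({(0-a-b)/2, (c-a-b)/2, (-c-a-b)/2} : Finset F) := by
    ext x
    simp only [Finset.mem_filter, Finset.mem_univ, true_and, Finset.mem_insert,
      Finset.mem_singleton]
    rw [hmem x, hlin 0 x, hlin c x, hlin (-c) x]
  rw [hset]
  refine Finset.card_eq_three.mpr ⟨_, _, _, ?_, ?_, ?_, rfl⟩
  · intro h; apply hc; field_simp at h; linear_combination -h
  · intro h; apply hc; field_simp at h; linear_combination h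
  · intro h
    field_simp at h
    have h' : (2:F)*c = 0 := by linear_combination h
    exact hc ((mul_eq_zero.mp h').resolve_left h2)

theorem stmt_14 (p n : ℕ) (hp : p.Prime) (hodd : p ≠ 2) (hp5 : p ≠ 5) (hn : 0 < n)
    (F : Type) [Field F] [Fintype F] [DecidableEq F]
    (hcard : Fintype.card F = p ^ n) :
    IsGreatest {k : ℕ | ∃ a b : F, a ≠ 0 ∧ b ≠ 0 ∧
      (Finset.univ.filter (fun x : F =>
        (x + a + b) ^ 5 - (x + b) ^ 5 - (x + a) ^ 5 + x ^ 5 = 0)).card = k} 3 := by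
  haveI := aux_charP p n hp hn F hcard
  have h2 : (2 : F) ≠ 0 := by
    intro h
    have hd : p ∣ 2 := (CharP.cast_eq_zero_iff F p 2).mp (by exact_mod_cast h)
    exact hodd ((Nat.prime_dvd_prime_iff_eq hp Nat.prime_two).mp hd)
  have h5 : (5 : F) ≠ 0 := by
    intro h
    have hd : p ∣ 5 := (CharP.cast_eq_zero_iff F p 5).mp (by exact_mod_cast h)
    exact hp5 ((Nat.prime_dvd_prime_iff_eq hp (by norm_num)).mp hd)
  constructor
  · obtain ⟨a, b, c, ha, hb, hc, habc⟩ := aux_exists p n hp hodd hp5 hn F hcard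
    exact ⟨a, b, ha, hb, aux_eq_three F a b c h2 h5 ha hb hc habc⟩
  · rintro k ⟨a, b, ha, hb, rfl⟩
    exact aux_le_three F a b h2 (mul_ne_zero (mul_ne_zero h5 ha) hb)
end

section
/- Let p be a prime with p ≥ 5 and p ≠ 7, n a positive integer, and let F(x) = x^7 on F_{p^n}. For all a, b ∈ F_{p^n} with ab ≠ 0, ∇_F(a,b) ≤ 5; consequently the second-order zero differential uniformity of F is at most 5. -/
open Polynomial

theorem stmt_15 (p n : ℕ) (hp : p.Prime) (hp5 : 5 ≤ p) (hp7 : p ≠ 7) (hn : 0 < n)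
    (F : Type) [Field F] [Fintype F] [DecidableEq F]
    (hcard : Fintype.card F = p ^ n) :
    ∀ a b : F, a * b ≠ 0 →
      (Finset.univ.filter (fun x : F =>
        (x + a + b) ^ 7 - (x + b) ^ 7 - (x + a) ^ 7 + x ^ 7 = 0)).card ≤ 5 := by
  -- characteristic of F is p
  have hq : ringChar F = p := by
    have hprime : (ringChar F).Prime := CharP.char_is_prime F (ringChar F)
    have hz : ((p ^ n : ℕ) : F) = 0 := by
      rw [← hcard]; exact Nat.cast_card_eq_zero F
    have hdvd : ringChar F ∣ p ^ n := (CharP.cast_eq_zero_iff F (ringChar F) _).mp hz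
    exact (Nat.prime_dvd_prime_iff_eq hprime hp).mp (hprime.dvd_of_dvd_pow hdvd)
  have h42 : (42 : F) ≠ 0 := by
    have hnd : ¬ p ∣ 42 := by
      intro h
      have hle : p ≤ 42 := Nat.le_of_dvd (by norm_num) h
      interval_cases p <;> revert hp hp7 h <;> decide
    haveI : CharP F p := hq ▸ ringChar.charP F
    intro h0
    have h0' : ((42 : ℕ) : F) = 0 := by norm_num at h0 ⊢; exact h0
    exact hnd ((CharP.cast_eq_zero_iff F p 42).mp h0')
  intro a b hab
  set q : Polynomial F :=
    C (42*a*b) * X^5 + C (105*a*b*(a+b)) * X^4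
      + C (140*a^3*b + 210*a^2*b^2 + 140*a*b^3) * X^3
      + C (105*a*b^4 + 210*a^2*b^3 + 210*a^3*b^2 + 105*a^4*b) * X^2
      + C (42*a*b^5 + 105*a^2*b^4 + 140*a^3*b^3 + 105*a^4*b^2 + 42*a^5*b) * X
      + C (7*a*b^6 + 21*a^2*b^5 + 35*a^3*b^4 + 35*a^4*b^3 + 21*a^5*b^2 + 7*a^6*b) with hqdef
  have hc5 : q.coeff 5 = 42*a*b := by
    simp only [hqdef, coeff_add, coeff_C_mul, coeff_X_pow, coeff_X, coeff_C]
    norm_num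
  have h42ab : (42 : F) * a * b ≠ 0 := by
    rcases mul_ne_zero_iff.mp hab with ⟨ha, hb⟩
    exact mul_ne_zero (mul_ne_zero h42 ha) hb
  have hq0 : q ≠ 0 := by
    intro h
    rw [h, coeff_zero] at hc5
    exact h42ab hc5.symm
  have hdeg : q.natDegree ≤ 5 := by
    rw [hqdef]
    compute_degree
  have heval : ∀ x : F, (x + a + b) ^ 7 - (x + b) ^ 7 - (x + a) ^ 7 + x ^ 7 = q.eval x := by
    intro x
    simp only [hqdef, eval_add, eval_mul, eval_pow, eval_C, eval_X]
    ring
  have hsub : (Finset.univ.filter (fun x : F =>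
      (x + a + b) ^ 7 - (x + b) ^ 7 - (x + a) ^ 7 + x ^ 7 = 0)) ⊆ q.roots.toFinset := by
    intro x hx
    rw [Finset.mem_filter] at hx
    rw [Multiset.mem_toFinset, mem_roots hq0, IsRoot.def, ← heval x]
    exact hx.2
  calc _ ≤ q.roots.toFinset.card := Finset.card_le_card hsub
    _ ≤ Multiset.card q.roots := q.roots.toFinset_card_le
    _ ≤ q.natDegree := q.card_roots'
    _ ≤ 5 := hdeg
end

section
/- Let n be an odd positive integer and let F(x) = x^7 on F_{3^n}. For all a, b ∈ F_{3^n} with ab ≠ 0 (note a^2+b^2 ≠ 0 automatically since −1 is a nonsquare in F_{3^n} for n odd): if η(a^2+b^2) = 1 then ∇_F(a,b) = 1, and if η(a^2+b^2) = −1 then ∇_F(a,b) = 3. -/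
theorem stmt_16 (n : ℕ) (hn : 0 < n) (hodd : Odd n)
    (F : Type) [Field F] [Fintype F] [DecidableEq F]
    (hcard : Fintype.card F = 3 ^ n)
    (a b : F) (hab : a * b ≠ 0) :
    ((a ^ 2 + b ^ 2 ≠ 0 ∧ IsSquare (a ^ 2 + b ^ 2) →
      (Finset.univ.filter (fun x : F =>
        (x + a + b) ^ 7 - (x + b) ^ 7 - (x + a) ^ 7 + x ^ 7 = 0)).card = 1) ∧
     (¬ IsSquare (a ^ 2 + b ^ 2) →
      (Finset.univ.filter (fun x : F =>
        (x + a + b) ^ 7 - (x + b) ^ 7 - (x + a) ^ 7 + x ^ 7 = 0)).card = 3)) := by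
  obtain ⟨ha, hb⟩ := mul_ne_zero_iff.mp hab
  have h3 : (3 : F) = 0 := by
    have h := FiniteField.cast_card_eq_zero F
    rw [hcard] at h
    push_cast at h
    exact pow_eq_zero_iff hn.ne' |>.mp h
  have h2 : (2 : F) ≠ 0 := by
    have h2' : (2 : F) = -1 := by linear_combination h3
    rw [h2']; exact neg_ne_zero.mpr one_ne_zero
  have hm1 : ¬ IsSquare (-1 : F) := by
    rw [FiniteField.isSquare_neg_one_iff]
    push_neg
    rw [hcard]
    obtain ⟨k, rfl⟩ := hodd
    rw [pow_succ, pow_mul, Nat.mul_mod, Nat.pow_mod]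
    norm_num
  have key : ∀ x : F, (x + a + b) ^ 7 - (x + b) ^ 7 - (x + a) ^ 7 + x ^ 7 =
      2 * a * b * ((a ^ 2 + b ^ 2) * (x - (a + b)) ^ 3 + a ^ 2 * b ^ 2 * (x - (a + b))) := by
    intro x
    linear_combination (3*a*b^6 + 9*a^2*b^5 + 15*a^3*b^4 + 15*a^4*b^3 + 9*a^5*b^2 + 3*a^6*b +
      12*x*a*b^5 + 31*x*a^2*b^4 + 42*x*a^3*b^3 + 31*x*a^4*b^2 + 12*x*a^5*b + 37*x^2*a*b^4 +
      72*x^2*a^2*b^3 + 72*x^2*a^3*b^2 + 37*x^2*a^4*b + 46*x^3*a*b^3 + 70*x^3*a^2*b^2 +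
      46*x^3*a^3*b + 35*x^4*a*b^2 + 35*x^4*a^2*b + 14*x^5*a*b) * h3
  have h2ab : (2 : F) * a * b ≠ 0 := mul_ne_zero (mul_ne_zero h2 ha) hb
  have hab2 : a ^ 2 * b ^ 2 ≠ 0 := mul_ne_zero (pow_ne_zero 2 ha) (pow_ne_zero 2 hb)
  constructor
  · rintro ⟨hs0, c, hc⟩
    have hset : (Finset.univ.filter (fun x : F =>
        (x + a + b) ^ 7 - (x + b) ^ 7 - (x + a) ^ 7 + x ^ 7 = 0)) = {a + b} := by
      ext x
      simp only [Finset.mem_filter, Finset.mem_univ, true_and, Finset.mem_singleton]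
      rw [key x]
      constructor
      · intro h
        have hE : (x - (a + b)) * ((a ^ 2 + b ^ 2) * (x - (a + b)) ^ 2 + a ^ 2 * b ^ 2) = 0 := by
          rcases mul_eq_zero.mp h with h' | h'
          · exact absurd h' h2ab
          · linear_combination h'
        rcases mul_eq_zero.mp hE with hy | hq
        · exact sub_eq_zero.mp hy
        · exfalso
          have hy0 : x - (a + b) ≠ 0 := by
            intro h0
            rw [h0] at hq
            simp at hq
            rcases hq with h' | h'
            · exact ha h'
            · exact hb h'
          have hc0 : c ≠ 0 := by
            rintro rfl
            apply hs0
            rw [hc]; ring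
          apply hm1
          refine ⟨c * (x - (a + b)) * (a * b)⁻¹, ?_⟩
          have habne : (a * b : F) ≠ 0 := hab
          have hkey : (c * (x - (a + b))) ^ 2 = -(a * b) ^ 2 := by
            linear_combination hq - ((x - (a + b)) ^ 2) * hc
          field_simp
          linear_combination -hkey
      · intro hx
        rw [hx, sub_self]
        ring
    rw [hset, Finset.card_singleton]
  · intro hns
    have hs0 : a ^ 2 + b ^ 2 ≠ 0 := fun h => hns (h ▸ ⟨0, by ring⟩)
    have hq1 : quadraticChar F (a ^ 2 + b ^ 2) = -1 :=
      (quadraticChar_neg_one_iff_not_isSquare).mpr hns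
    have hqm1 : quadraticChar F (-1) = -1 :=
      (quadraticChar_neg_one_iff_not_isSquare).mpr hm1
    have hq : quadraticChar F (-(a ^ 2 + b ^ 2)) = 1 := by
      rw [show (-(a ^ 2 + b ^ 2) : F) = -1 * (a ^ 2 + b ^ 2) by ring, map_mul, hq1, hqm1]
      norm_num
    have hsq : IsSquare (-(a ^ 2 + b ^ 2)) :=
      (quadraticChar_one_iff_isSquare (neg_ne_zero.mpr hs0)).mp hq
    obtain ⟨u, hu⟩ := hsq
    have hu0 : u ≠ 0 := by
      rintro rfl
      apply hs0
      linear_combination -hu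
    set w : F := a * b * u⁻¹ with hwdef
    have hw0 : w ≠ 0 := mul_ne_zero hab (inv_ne_zero hu0)
    have huw : u * w = a * b := by
      rw [hwdef]; field_simp
    have hsw : (a ^ 2 + b ^ 2) * w ^ 2 = -(a ^ 2 * b ^ 2) := by
      have h1 : (u * w) ^ 2 = (a * b) ^ 2 := by rw [huw]
      linear_combination (-(w ^ 2)) * hu - h1
    have hset : (Finset.univ.filter (fun x : F =>
        (x + a + b) ^ 7 - (x + b) ^ 7 - (x + a) ^ 7 + x ^ 7 = 0)) =
        {a + b, a + b + w, a + b - w} := by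
      ext x
      simp only [Finset.mem_filter, Finset.mem_univ, true_and, Finset.mem_insert,
        Finset.mem_singleton]
      rw [key x]
      constructor
      · intro h
        have hE : (a ^ 2 + b ^ 2) * ((x - (a + b)) * ((x - (a + b) - w) * (x - (a + b) + w))) = 0 := by
          rcases mul_eq_zero.mp h with h' | h'
          · exact absurd h' h2ab
          · linear_combination h' - (x - (a + b)) * hsw
        rcases mul_eq_zero.mp hE with h' | h'
        · exact absurd h' hs0
        rcases mul_eq_zero.mp h' with h' | h'
        · left; linear_combination h'
        rcases mul_eq_zero.mp h' with h' | h'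
        · right; left; linear_combination h'
        · right; right; linear_combination h'
      · rintro (rfl | rfl | rfl)
        · ring
        · linear_combination (2 * a * b * w) * hsw
        · linear_combination (-(2 * a * b * w)) * hsw
    have hne1 : a + b ≠ a + b + w := by
      intro h; apply hw0; linear_combination -h
    have hne2 : a + b ≠ a + b - w := by
      intro h; apply hw0; linear_combination h
    have hne3 : a + b + w ≠ a + b - w := by
      intro h
      have h2w : (2 : F) * w = 0 := by linear_combination h
      rcases mul_eq_zero.mp h2w with h' | h'
      · exact h2 h'
      · exact hw0 h'
    rw [hset, Finset.card_insert_of_notMem (by simp [hne1, hne2]),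
      Finset.card_insert_of_notMem (by simp [hne3]), Finset.card_singleton]
end

section
/- Let n be an even positive integer and let F(x) = x^7 on F_{3^n}. For all a, b ∈ F_{3^n} with ab ≠ 0 and a^2 + b^2 = 0, ∇_F(a,b) = 1. -/
theorem stmt_17 (n : ℕ) (hn : 0 < n) (heven : Even n)
    (F : Type) [Field F] [Fintype F] [DecidableEq F]
    (hcard : Fintype.card F = 3 ^ n)
    (a b : F) (hab : a * b ≠ 0) (hzero : a ^ 2 + b ^ 2 = 0) :
    (Finset.univ.filter (fun x : F =>
      (x + a + b) ^ 7 - (x + b) ^ 7 - (x + a) ^ 7 + x ^ 7 = 0)).card = 1 := by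
  have ha : a ≠ 0 := fun h => hab (by simp [h])
  have hb : b ≠ 0 := fun h => hab (by simp [h])
  -- characteristic is 3
  obtain ⟨m, hp, hc⟩ := FiniteField.card F (ringChar F)
  have hdvd : ringChar F ∣ 3 ^ n := by
    rw [hcard] at hc
    exact hc ▸ dvd_pow_self (ringChar F) m.ne_zero
  have hp3 : ringChar F = 3 :=
    (Nat.prime_dvd_prime_iff_eq hp (by norm_num)).mp (hp.dvd_of_dvd_pow hdvd)
  have h3 : (3 : F) = 0 := by
    have := CharP.cast_eq_zero F (ringChar F)
    rwa [hp3] at this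
  rw [Finset.card_eq_one]
  refine ⟨a + b, ?_⟩
  ext x
  simp only [Finset.mem_filter, Finset.mem_univ, true_and, Finset.mem_singleton]
  constructor
  · intro hx
    have key : a ^ 3 * b ^ 3 * (x - (a + b)) = 0 := by
      linear_combination (-1) * hx
        + (2*b^7 - 2*a*b^6 - 19*x*a*b^5 - 35*x^2*b^5 - 35*x^2*a*b^4 - 70*x^3*b^4
            - 35*x^4*b^3 + 35*x^4*a*b^2 + 14*x^5*a*b) * h3
        + (-6*b^5 + 13*a*b^4 + 27*a^2*b^3 + 21*a^3*b^2 + 7*a^4*b + 99*x*a*b^3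
            + 105*x*a^2*b^2 + 42*x*a^3*b + 105*x^2*b^3 + 210*x^2*a*b^2 + 105*x^2*a^2*b
            + 210*x^3*b^2 + 140*x^3*a*b + 105*x^4*b) * hzero
    have hne : a ^ 3 * b ^ 3 ≠ 0 := mul_ne_zero (pow_ne_zero 3 ha) (pow_ne_zero 3 hb)
    have := (mul_eq_zero.mp key).resolve_left hne
    exact sub_eq_zero.mp this
  · rintro rfl
    linear_combination (147*a*b^6 + 651*a^2*b^5 + 1225*a^3*b^4 + 1225*a^4*b^3
      + 651*a^5*b^2 + 147*a^6*b) * h3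
end

section
/- Let n be an even positive integer and let F(x) = x^7 on F_{3^n}. For all a, b ∈ F_{3^n} with ab ≠ 0 and a^2 + b^2 ≠ 0: if η(a^2+b^2) = 1 then ∇_F(a,b) = 3, and if η(a^2+b^2) = −1 then ∇_F(a,b) = 1. -/
theorem stmt_18 (n : ℕ) (hn : 0 < n) (heven : Even n)
    (F : Type) [Field F] [Fintype F] [DecidableEq F]
    (hcard : Fintype.card F = 3 ^ n)
    (a b : F) (hab : a * b ≠ 0) (hne : a ^ 2 + b ^ 2 ≠ 0) :
    ((IsSquare (a ^ 2 + b ^ 2) →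
      (Finset.univ.filter (fun x : F =>
        (x + a + b) ^ 7 - (x + b) ^ 7 - (x + a) ^ 7 + x ^ 7 = 0)).card = 3) ∧
     (¬ IsSquare (a ^ 2 + b ^ 2) →
      (Finset.univ.filter (fun x : F =>
        (x + a + b) ^ 7 - (x + b) ^ 7 - (x + a) ^ 7 + x ^ 7 = 0)).card = 1)) := by
  have ha : a ≠ 0 := fun h => hab (by rw [h, zero_mul])
  have hb : b ≠ 0 := fun h => hab (by rw [h, mul_zero])
  have h3 : (3 : F) = 0 := by
    have h := FiniteField.cast_card_eq_zero F
    rw [hcard] at h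
    push_cast at h
    exact pow_eq_zero_iff hn.ne' |>.mp h
  have hm1 : IsSquare (-1 : F) := by
    rw [FiniteField.isSquare_neg_one_iff, hcard]
    obtain ⟨k, hk⟩ := heven
    subst hk
    rw [← two_mul, pow_mul]
    norm_num [Nat.pow_mod]
  have key : ∀ x : F, (x + a + b) ^ 7 - (x + b) ^ 7 - (x + a) ^ 7 + x ^ 7 =
      -(a * b * (x - (a + b)) * ((a^2+b^2)*x^2 + (a^2+b^2)*(a+b)*x +
        ((a^2+b^2)*(a+b)^2 + a^2*b^2))) := by
    intro x
    linear_combination (14*a*b*x^5 + 35*a*b^2*x^4 + 47*a*b^3*x^3 + 35*a*b^4*x^2 + 14*a*b^5*x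
      + 2*a*b^6 + 35*a^2*b*x^4 + 70*a^2*b^2*x^3 + 70*a^2*b^3*x^2 + 35*a^2*b^4*x + 6*a^2*b^5
      + 47*a^3*b*x^3 + 70*a^3*b^2*x^2 + 47*a^3*b^3*x + 10*a^3*b^4 + 35*a^4*b*x^2
      + 35*a^4*b^2*x + 10*a^4*b^3 + 14*a^5*b*x + 6*a^5*b^2 + 2*a^6*b) * h3
  have hmem : ∀ x : F, ((x + a + b) ^ 7 - (x + b) ^ 7 - (x + a) ^ 7 + x ^ 7 = 0) ↔
      (x = a + b ∨ (a^2+b^2)*x^2 + (a^2+b^2)*(a+b)*x + ((a^2+b^2)*(a+b)^2 + a^2*b^2) = 0) := by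
    intro x
    rw [key x, neg_eq_zero]
    constructor
    · intro h
      rcases mul_eq_zero.mp h with h | h
      · rcases mul_eq_zero.mp h with h | h
        · exact absurd h hab
        · exact Or.inl (sub_eq_zero.mp h)
      · exact Or.inr h
    · rintro (h | h)
      · rw [h]; ring
      · rw [h]; ring
  constructor
  · intro hsq
    obtain ⟨c, hc⟩ := hsq
    obtain ⟨j, hj⟩ := hm1
    have hc0 : c ≠ 0 := by
      intro h; apply hne; rw [hc, h, mul_zero]
    have hj0 : j ≠ 0 := by
      intro h; rw [h, mul_zero] at hj; norm_num at hj
    set e : F := j * a * b / c with he_def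
    have he0 : e ≠ 0 := by
      apply div_ne_zero _ hc0
      exact mul_ne_zero (mul_ne_zero hj0 ha) hb
    have he : (a^2+b^2) * (e * e) = -(a^2*b^2) := by
      rw [hc, he_def]
      field_simp
      linear_combination (-1) * hj
    have hfac : ∀ x : F, (a^2+b^2)*x^2 + (a^2+b^2)*(a+b)*x + ((a^2+b^2)*(a+b)^2 + a^2*b^2)
        = (a^2+b^2) * (x - ((a+b)+e)) * (x - ((a+b)-e)) := by
      intro x
      linear_combination he + (a^2+b^2)*(a+b)*x*h3
    have hset : (Finset.univ.filter (fun x : F =>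
        (x + a + b) ^ 7 - (x + b) ^ 7 - (x + a) ^ 7 + x ^ 7 = 0))
        = {a + b, (a+b)+e, (a+b)-e} := by
      ext x
      simp only [Finset.mem_filter, Finset.mem_univ, true_and, Finset.mem_insert,
        Finset.mem_singleton]
      rw [hmem x]
      constructor
      · rintro (h | h)
        · exact Or.inl h
        · rw [hfac x] at h
          rcases mul_eq_zero.mp h with h | h
          · rcases mul_eq_zero.mp h with h | h
            · exact absurd h hne
            · exact Or.inr (Or.inl (sub_eq_zero.mp h))
          · exact Or.inr (Or.inr (sub_eq_zero.mp h))
      · rintro (h | h | h)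
        · exact Or.inl h
        · right; rw [h, hfac]; ring
        · right; rw [h, hfac]; ring
    rw [hset]
    rw [Finset.card_insert_of_notMem, Finset.card_insert_of_notMem, Finset.card_singleton]
    · simp only [Finset.mem_singleton]
      intro h
      exact he0 (by linear_combination 2*h - e*h3)
    · simp only [Finset.mem_insert, Finset.mem_singleton]
      rintro (h | h)
      · exact he0 (by linear_combination -h)
      · exact he0 (by linear_combination h)
  · intro hns
    obtain ⟨j, hj⟩ := hm1
    have hnoQ : ∀ x : F,
        (a^2+b^2)*x^2 + (a^2+b^2)*(a+b)*x + ((a^2+b^2)*(a+b)^2 + a^2*b^2) ≠ 0 := by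
      intro x hQ
      apply hns
      have hy : ((a^2+b^2)*x - (a^2+b^2)*(a+b))^2 = -((a^2+b^2)*(a*b)^2) := by
        linear_combination (a^2+b^2)*hQ - (a^2+b^2)^2*(a+b)*x*h3
      refine ⟨j * ((a^2+b^2)*x - (a^2+b^2)*(a+b)) / (a*b), ?_⟩
      rw [div_mul_div_comm, eq_div_iff (mul_ne_zero hab hab)]
      linear_combination hy + ((a^2+b^2)*x - (a^2+b^2)*(a+b))^2 * hj
    have hset : (Finset.univ.filter (fun x : F =>
        (x + a + b) ^ 7 - (x + b) ^ 7 - (x + a) ^ 7 + x ^ 7 = 0)) = {a + b} := by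
      ext x
      simp only [Finset.mem_filter, Finset.mem_univ, true_and, Finset.mem_singleton]
      rw [hmem x]
      constructor
      · rintro (h | h)
        · exact h
        · exact absurd h (hnoQ x)
      · intro h; exact Or.inl h
    rw [hset, Finset.card_singleton]
end

section
/- Let n be a positive integer. Then F(x) = x^7 on F_{3^n} is second-order zero differential 3-uniform, i.e. max{∇_F(a,b) : a, b ∈ F_{3^n}\{0}} = 3. -/
open Polynomial

theorem stmt_19 (n : ℕ) (hn : 0 < n)
    (F : Type) [Field F] [Fintype F] [DecidableEq F]
    (hcard : Fintype.card F = 3 ^ n) :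
    IsGreatest {k : ℕ | ∃ a b : F, a ≠ 0 ∧ b ≠ 0 ∧
      (Finset.univ.filter (fun x : F =>
        (x + a + b) ^ 7 - (x + b) ^ 7 - (x + a) ^ 7 + x ^ 7 = 0)).card = k} 3 := by
  -- characteristic is 3
  have hchar : (3 : F) = 0 := by
    haveI := ringChar.charP F
    have hp : (ringChar F).Prime := CharP.char_is_prime F (ringChar F)
    have hdvd : ringChar F ∣ 3 ^ n := by
      rw [← hcard]
      exact ringChar.dvd (FiniteField.cast_card_eq_zero F)
    have hp3 : ringChar F = 3 :=
      (Nat.prime_dvd_prime_iff_eq hp (by norm_num)).mp (hp.dvd_of_dvd_pow hdvd)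
    exact (ringChar.spec F 3).mpr (hp3 ▸ dvd_refl _)
  have h2 : (2 : F) ≠ 0 := by
    intro h
    have : (1 : F) = 0 := by linear_combination hchar - h
    exact one_ne_zero this
  constructor
  · -- membership: a = b = 1 gives exactly 3 solutions
    refine ⟨1, 1, one_ne_zero, one_ne_zero, ?_⟩
    have hne1 : (1 : F) ≠ -1 := by
      intro h
      exact h2 (by linear_combination h)
    have hne0 : (0 : F) ≠ -1 := by
      intro h
      exact one_ne_zero (α := F) (by linear_combination h)
    have hset : (Finset.univ.filter (fun x : F =>
        (x + 1 + 1) ^ 7 - (x + 1) ^ 7 - (x + 1) ^ 7 + x ^ 7 = 0)) = {0, 1, -1} := by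
      ext x
      simp only [Finset.mem_filter, Finset.mem_univ, true_and, Finset.mem_insert,
        Finset.mem_singleton]
      have hkey : (x + 1 + 1) ^ 7 - (x + 1) ^ 7 - (x + 1) ^ 7 + x ^ 7
          = x * (x - 1) * (x + 1) := by
        linear_combination (42 + 145*x + 210*x^2 + 163*x^3 + 70*x^4 + 14*x^5) * hchar
      rw [hkey]
      constructor
      · intro h
        rcases mul_eq_zero.mp h with h | h
        · rcases mul_eq_zero.mp h with h | h
          · exact Or.inl h
          · exact Or.inr (Or.inl (by linear_combination h))
        · exact Or.inr (Or.inr (by linear_combination h))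
      · rintro (rfl | rfl | rfl) <;> ring
    rw [hset]
    rw [Finset.card_insert_of_notMem (by simp [zero_ne_one, hne0]),
      Finset.card_insert_of_notMem (by simp [hne1]), Finset.card_singleton]
  · -- upper bound
    rintro k ⟨a, b, ha, hb, rfl⟩
    set P : F[X] := C (2*a*b*(a^2+b^2)) * X ^ 3 + C (2*a^3*b^3) * X + C (a*b*(a+b)*(a-b)^4)
      with hP
    have hPne : P ≠ 0 := by
      intro h
      have hc : P.coeff 1 = 2 * a ^ 3 * b ^ 3 := by
        rw [hP]
        simp only [coeff_add, coeff_C_mul, coeff_X_pow, coeff_X_one, coeff_C]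
        norm_num
      rw [h, coeff_zero] at hc
      exact mul_ne_zero (mul_ne_zero h2 (pow_ne_zero 3 ha)) (pow_ne_zero 3 hb) hc.symm
    have hdeg : P.natDegree ≤ 3 := by
      rw [hP]
      compute_degree
    have hsub : (Finset.univ.filter (fun x : F =>
        (x + a + b) ^ 7 - (x + b) ^ 7 - (x + a) ^ 7 + x ^ 7 = 0)) ⊆ P.roots.toFinset := by
      intro x hx
      simp only [Finset.mem_filter, Finset.mem_univ, true_and] at hx
      rw [Multiset.mem_toFinset, mem_roots hPne]
      have heval : P.eval x = (x + a + b) ^ 7 - (x + b) ^ 7 - (x + a) ^ 7 + x ^ 7 := by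
        simp only [hP, eval_add, eval_mul, eval_C, eval_pow, eval_X]
        linear_combination (-(2*a*b^6) - 8*a^2*b^5 - 11*a^3*b^4 - 11*a^4*b^3 - 8*a^5*b^2
          - 2*a^6*b - 14*x*a*b^5 - 35*x*a^2*b^4 - 46*x*a^3*b^3 - 35*x*a^4*b^2 - 14*x*a^5*b
          - 35*x^2*a*b^4 - 70*x^2*a^2*b^3 - 70*x^2*a^3*b^2 - 35*x^2*a^4*b
          - 46*x^3*a*b^3 - 70*x^3*a^2*b^2 - 46*x^3*a^3*b
          - 35*x^4*a*b^2 - 35*x^4*a^2*b - 14*x^5*a*b) * hchar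
      rw [Polynomial.IsRoot.def, heval]
      exact hx
    calc (Finset.univ.filter _).card ≤ P.roots.toFinset.card := Finset.card_le_card hsub
      _ ≤ Multiset.card P.roots := Multiset.toFinset_card_le _
      _ ≤ P.natDegree := P.card_roots' 
      _ ≤ 3 := hdeg
end
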